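/- arXiv:1411.2956 — 3 statements merged into one kernel-verified Lean document; each statement's English description precedes it below -/
import Mathlib

section
/- (Comparison principle) Let Ω ⊂ ℝ^N be a bounded open set and let u, v ∈ W̃^{s,p}(Ω) satisfy u ≤ v a.e. in ℝ^N∖Ω, together with the inequality ∬_{ℝ^N×ℝ^N} (u(x)−u(y))^⟨p−1⟩(φ(x)−φ(y))/|x−y|^{N+ps} dx dy ≤ ∬_{ℝ^N×ℝ^N} (v(x)−v(y))^⟨p−1⟩(φ(x)−φ(y))/|x−y|^{N+ps} dx dy for every φ ∈ W^{s,p}_0(Ω) with φ ≥ 0 a.e. in Ω. Then u ≤ v a.e. in Ω. -/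
open MeasureTheory Metric Set Filter Topology

noncomputable section

/-- Signed power `a^⟨q⟩ = |a|^(q-1) · a`. -/
def spow (a q : ℝ) : ℝ := |a| ^ (q - 1) * a

/-- Euclidean space `ℝ^N`. -/
abbrev Rn (N : ℕ) := EuclideanSpace ℝ (Fin N)

/-- The integrand of the Gagliardo seminorm. -/
def energyIntegrand (N : ℕ) (p s : ℝ) (φ : Rn N → ℝ) (z : Rn N × Rn N) : ℝ :=
  |φ z.1 - φ z.2| ^ p / ‖z.1 - z.2‖ ^ ((N : ℝ) + p * s)

/-- The integrand of the nonlinear pairing `(u, φ)`. -/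
def gker (N : ℕ) (p s : ℝ) (u φ : Rn N → ℝ) (z : Rn N × Rn N) : ℝ :=
  spow (u z.1 - u z.2) (p - 1) * (φ z.1 - φ z.2) / ‖z.1 - z.2‖ ^ ((N : ℝ) + p * s)

/-- `φ ∈ W^{s,p}_0(Ω)`. -/
def memW0 (N : ℕ) (p s : ℝ) (Ω : Set (Rn N)) (φ : Rn N → ℝ) : Prop :=
  MemLp φ (ENNReal.ofReal p) volume ∧
  Integrable (energyIntegrand N p s φ) volume ∧
  ∀ᵐ x, x ∉ Ω → φ x = 0

/-- `u ∈ W̃^{s,p}(Ω)` (for bounded `Ω`). -/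
def memWtilde (N : ℕ) (p s : ℝ) (Ω : Set (Rn N)) (u : Rn N → ℝ) : Prop :=
  AEStronglyMeasurable u volume ∧
  (∀ K : Set (Rn N), IsCompact K → IntegrableOn (fun x => |u x| ^ p) K) ∧
  (∃ U : Set (Rn N), IsOpen U ∧ closure Ω ⊆ U ∧
     IntegrableOn (fun x => |u x| ^ p) U ∧
     IntegrableOn (energyIntegrand N p s u) (U ×ˢ U)) ∧
  Integrable (fun x => |u x| ^ (p - 1) / (1 + ‖x‖) ^ ((N : ℝ) + p * s))

/-- `u ∈ W̃^{s,p}_loc(Ω)`. -/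
def memWtildeLoc (N : ℕ) (p s : ℝ) (Ω : Set (Rn N)) (u : Rn N → ℝ) : Prop :=
  ∀ Ω' : Set (Rn N), IsOpen Ω' → Bornology.IsBounded Ω' → Ω' ⊆ Ω → memWtilde N p s Ω' u

/-- `u` is a weak solution of `(-Δ)^s_p u = f` in `Ω`. -/
def isWeakSol (N : ℕ) (p s : ℝ) (Ω : Set (Rn N)) (u f : Rn N → ℝ) : Prop :=
  ∀ Ω' : Set (Rn N), IsOpen Ω' → Bornology.IsBounded Ω' → Ω' ⊆ Ω →
    ∀ φ : Rn N → ℝ, memW0 N p s Ω' φ →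
      (∫ z : Rn N × Rn N, gker N p s u φ z) = ∫ x in Ω', f x * φ x

/-- `(-Δ)^s_p u ≤ g` weakly in `Ω`. -/
def weakLE (N : ℕ) (p s : ℝ) (Ω : Set (Rn N)) (u g : Rn N → ℝ) : Prop :=
  ∀ φ : Rn N → ℝ, memW0 N p s Ω φ → (∀ᵐ x, 0 ≤ φ x) →
    (∫ z : Rn N × Rn N, gker N p s u φ z) ≤ ∫ x in Ω, g x * φ x

/-- `(-Δ)^s_p u ≥ g` weakly in `Ω`. -/
def weakGE (N : ℕ) (p s : ℝ) (Ω : Set (Rn N)) (u g : Rn N → ℝ) : Prop :=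
  ∀ φ : Rn N → ℝ, memW0 N p s Ω φ → (∀ᵐ x, 0 ≤ φ x) →
    (∫ x in Ω, g x * φ x) ≤ ∫ z : Rn N × Rn N, gker N p s u φ z

/-- The nonlocal tail. -/
def tailF (N : ℕ) (p s : ℝ) (v : Rn N → ℝ) (x₀ : Rn N) (R : ℝ) : ℝ :=
  (R ^ (p * s) * ∫ y in {y : Rn N | R ≤ dist y x₀}, |v y| ^ (p - 1) / ‖x₀ - y‖ ^ ((N : ℝ) + p * s)) ^ (1 / (p - 1))


/- ## helpers -/

private lemma measurable_abs_rpow (c : ℝ) : Measurable fun a : ℝ => |a| ^ c := by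
  rcases le_or_gt 0 c with h | h
  · exact ((Real.continuous_rpow_const h).comp continuous_abs).measurable
  · have h2 : (fun a : ℝ => |a| ^ c) = fun a => (|a| ^ (-c))⁻¹ := by
      ext a; rw [← Real.rpow_neg (abs_nonneg a) (-c), neg_neg]
    rw [h2]
    exact (((Real.continuous_rpow_const (by linarith)).comp continuous_abs).measurable).inv

private lemma measurable_spow (q : ℝ) : Measurable fun a : ℝ => spow a q := by
  unfold spow
  exact (measurable_abs_rpow (q - 1)).mul measurable_id

private lemma abs_spow {q : ℝ} (hq : 0 < q) (a : ℝ) : |spow a q| = |a| ^ q := by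
  unfold spow
  rw [abs_mul, abs_of_nonneg (Real.rpow_nonneg (abs_nonneg a) _)]
  rcases eq_or_ne a 0 with rfl | ha
  · simp [Real.zero_rpow hq.ne']
  · rw [show q = (q-1)+1 by ring, Real.rpow_add_one (abs_ne_zero.2 ha)]
    ring_nf

private lemma spow_lt_spow {q : ℝ} (hq : 0 < q) {a b : ℝ} (hab : a < b) :
    spow a q < spow b q := by
  have key : ∀ x : ℝ, spow x q = if 0 ≤ x then x ^ q else -((-x) ^ q) := by
    intro x
    unfold spow
    rcases lt_trichotomy x 0 with hx | rfl | hx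
    · rw [if_neg (not_le.2 hx), abs_of_neg hx]
      rw [show q = (q-1)+1 by ring, Real.rpow_add_one (by linarith : (-x) ≠ 0)]
      ring_nf
    · simp [Real.zero_rpow hq.ne']
    · rw [if_pos hx.le, abs_of_pos hx, show q = (q-1)+1 by ring,
        Real.rpow_add_one hx.ne']
      ring_nf
  rw [key a, key b]
  rcases le_or_gt 0 a with ha | ha
  · rw [if_pos ha, if_pos (le_trans ha hab.le)]
    exact Real.rpow_lt_rpow ha hab hq
  · rw [if_neg (not_le.2 ha)]
    rcases le_or_gt 0 b with hb | hb
    · rw [if_pos hb]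
      have h1 : 0 < (-a) ^ q := Real.rpow_pos_of_pos (by linarith) q
      have h2 : 0 ≤ b ^ q := Real.rpow_nonneg hb q
      linarith
    · rw [if_neg (not_le.2 hb)]
      have := Real.rpow_lt_rpow (by linarith : (0:ℝ) ≤ -b) (by linarith : -b < -a) hq
      linarith

private lemma rpow_mix_le {p : ℝ} (hp : 1 < p) {a b : ℝ} (ha : 0 ≤ a) (hb : 0 ≤ b) :
    a ^ (p - 1) * b ≤ a ^ p + b ^ p := by
  have hp1 : (0:ℝ) < p - 1 := by linarith
  rcases le_total a b with h | h
  · have h1 : a ^ (p-1) * b ≤ b ^ (p-1) * b :=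
      mul_le_mul_of_nonneg_right (Real.rpow_le_rpow ha h hp1.le) hb
    have h2 : b ^ (p-1) * b = b ^ p := by
      rcases eq_or_lt_of_le hb with rfl | hb'
      · simp [Real.zero_rpow (by linarith : p ≠ 0)]
      · rw [show p = (p-1)+1 by ring, Real.rpow_add_one hb'.ne']
        ring_nf
    have h3 : (0:ℝ) ≤ a ^ p := Real.rpow_nonneg ha p
    linarith
  · have h1 : a ^ (p-1) * b ≤ a ^ (p-1) * a :=
      mul_le_mul_of_nonneg_left h (Real.rpow_nonneg ha _)
    have h2 : a ^ (p-1) * a = a ^ p := by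
      rcases eq_or_lt_of_le ha with rfl | ha'
      · simp [Real.zero_rpow (by linarith : p ≠ 0)]
      · rw [show p = (p-1)+1 by ring, Real.rpow_add_one ha'.ne']
        ring_nf
    have h3 : (0:ℝ) ≤ b ^ p := Real.rpow_nonneg hb p
    linarith

private lemma abs_sub_rpow_le {q : ℝ} (hq : 0 < q) (a b : ℝ) :
    |a - b| ^ q ≤ 2 ^ q * (|a| ^ q + |b| ^ q) := by
  have h1 : |a - b| ≤ 2 * max |a| |b| := by
    have := abs_sub a b
    rcases le_total |a| |b| with h | h
    · have := le_max_right |a| |b|; have := le_max_left |a| |b|; linarith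
    · have := le_max_right |a| |b|; have := le_max_left |a| |b|; linarith
  have h2 := Real.rpow_le_rpow (abs_nonneg _) h1 hq.le
  have h3 : (2 * max |a| |b|) ^ q = 2 ^ q * (max |a| |b|) ^ q :=
    Real.mul_rpow (by norm_num) (le_max_of_le_left (abs_nonneg a))
  have h4 : (max |a| |b|) ^ q ≤ |a| ^ q + |b| ^ q := by
    rcases max_cases |a| |b| with ⟨h, _⟩ | ⟨h, _⟩ <;> rw [h]
    · exact le_add_of_nonneg_right (Real.rpow_nonneg (abs_nonneg b) q)
    · exact le_add_of_nonneg_left (Real.rpow_nonneg (abs_nonneg a) q)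
  have h5 : (0:ℝ) ≤ 2 ^ q := Real.rpow_nonneg (by norm_num) q
  calc |a - b| ^ q ≤ (2 * max |a| |b|) ^ q := h2
    _ = 2 ^ q * (max |a| |b|) ^ q := h3
    _ ≤ 2 ^ q * (|a| ^ q + |b| ^ q) := mul_le_mul_of_nonneg_left h4 h5

private lemma div_le_div_nonneg_denom {a b c : ℝ} (h : a ≤ b) (hc : 0 ≤ c) :
    a / c ≤ b / c := by
  rcases eq_or_lt_of_le hc with rfl | hc'
  · simp
  · exact (div_le_div_iff_of_pos_right hc').2 h

private lemma ae_comp_fst {N : ℕ} {P : Rn N → Prop} (h : ∀ᵐ x, P x) :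
    ∀ᵐ z : Rn N × Rn N, P z.1 := by
  rw [ae_iff] at h ⊢
  rw [Measure.volume_eq_prod]
  have h0 : (Measure.prod (volume : Measure (Rn N)) volume)
      ((toMeasurable volume {x | ¬ P x}) ×ˢ (univ : Set (Rn N))) = 0 := by
    rw [Measure.prod_prod, measure_toMeasurable, h, zero_mul]
  refine measure_mono_null (fun z hz => ?_) h0
  exact ⟨subset_toMeasurable _ _ hz, mem_univ _⟩

private lemma ae_comp_snd {N : ℕ} {P : Rn N → Prop} (h : ∀ᵐ x, P x) :
    ∀ᵐ z : Rn N × Rn N, P z.2 := by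
  rw [ae_iff] at h ⊢
  rw [Measure.volume_eq_prod]
  have h0 : (Measure.prod (volume : Measure (Rn N)) volume)
      ((univ : Set (Rn N)) ×ˢ (toMeasurable volume {x | ¬ P x})) = 0 := by
    rw [Measure.prod_prod, measure_toMeasurable, h, mul_zero]
  refine measure_mono_null (fun z hz => ?_) h0
  exact ⟨mem_univ _, subset_toMeasurable _ _ hz⟩

private lemma ae_offdiag (N : ℕ) : ∀ᵐ z : Rn N × Rn N, 0 < N → z.1 ≠ z.2 := by
  rcases Nat.eq_zero_or_pos N with hN | hN
  · exact Eventually.of_forall (fun z h => absurd hN h.ne')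
  haveI : Nonempty (Fin N) := ⟨⟨0, hN⟩⟩
  have hm : MeasurableSet {z : Rn N × Rn N | z.1 = z.2} :=
    (isClosed_eq continuous_fst continuous_snd).measurableSet
  rw [ae_iff, Measure.volume_eq_prod]
  have : {z : Rn N × Rn N | ¬ (0 < N → z.1 ≠ z.2)} = {z | z.1 = z.2} := by
    ext z; simp [hN]
  rw [this, Measure.prod_apply hm]
  have : ∀ x : Rn N, (volume (Prod.mk x ⁻¹' {z : Rn N × Rn N | z.1 = z.2})) = 0 := by
    intro x
    have : (Prod.mk x ⁻¹' {z : Rn N × Rn N | z.1 = z.2}) = {x} := by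
      ext y; simp [eq_comm]
    rw [this]
    exact measure_singleton x
  simp [this]

private lemma ae_const_of_ae_eq {N : ℕ} (hN : 1 ≤ N) {ψ : Rn N → ℝ}
    (h : ∀ᵐ z : Rn N × Rn N, ψ z.1 = ψ z.2) : ∃ c : ℝ, ∀ᵐ y : Rn N, ψ y = c := by
  rw [Measure.volume_eq_prod] at h
  have h2 := Measure.ae_ae_of_ae_prod h
  have hne : (ae (volume : Measure (Rn N))).NeBot := by
    refine ae_neBot.mpr ?_
    intro h0
    have := isOpen_univ.measure_ne_zero (volume : Measure (Rn N)) univ_nonempty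
    rw [h0] at this
    exact this rfl
  obtain ⟨x, hx⟩ := h2.exists
  exact ⟨ψ x, hx.mono fun y hy => hy.symm⟩
private lemma integrable_far_kernel {N : ℕ} {r δ : ℝ} (hr : (N : ℝ) < r) (hδ : 0 < δ) :
    Integrable (fun t : Rn N =>
      Set.indicator {t : Rn N | δ ≤ ‖t‖} (fun t => (‖t‖ ^ r)⁻¹) t) := by
  have hr0 : (0:ℝ) ≤ r := le_trans (Nat.cast_nonneg N) hr.le
  have hmeas : Measurable fun t : Rn N => (‖t‖ ^ r)⁻¹ :=
    (((Real.continuous_rpow_const hr0).comp continuous_norm).measurable).inv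
  have hsetm : MeasurableSet {t : Rn N | δ ≤ ‖t‖} :=
    (isClosed_le continuous_const continuous_norm).measurableSet
  have hfinrank : (Module.finrank ℝ (Rn N) : ℝ) < r := by
    rw [finrank_euclideanSpace, Fintype.card_fin]; exact hr
  have hint : Integrable (fun t : Rn N => ((1 + δ⁻¹) ^ r) * ((1 + ‖t‖) ^ (-r))) :=
    (integrable_one_add_norm hfinrank).const_mul _
  refine hint.mono' ((hmeas.indicator hsetm).aestronglyMeasurable)
    (Eventually.of_forall fun t => ?_)
  have hd : (0:ℝ) < 1 + δ⁻¹ := by positivity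
  by_cases ht : t ∈ {t : Rn N | δ ≤ ‖t‖}
  · rw [indicator_of_mem ht]
    have htδ : δ ≤ ‖t‖ := ht
    have htpos : (0:ℝ) < ‖t‖ := lt_of_lt_of_le hδ htδ
    rw [Real.norm_eq_abs, abs_of_nonneg (inv_nonneg.2 (Real.rpow_nonneg (norm_nonneg t) r))]
    have key : (1 + ‖t‖) / (1 + δ⁻¹) ≤ ‖t‖ := by
      rw [div_le_iff₀ hd]
      have h1 : (1:ℝ) ≤ ‖t‖ / δ := (one_le_div hδ).2 htδ
      have : ‖t‖ * (1 + δ⁻¹) = ‖t‖ + ‖t‖ / δ := by field_simp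
      nlinarith [htpos]
    have hq : (0:ℝ) < (1 + ‖t‖) / (1 + δ⁻¹) := by positivity
    have h2 : ((1 + ‖t‖) / (1 + δ⁻¹)) ^ r ≤ ‖t‖ ^ r :=
      Real.rpow_le_rpow hq.le key hr0
    have h3 : (0:ℝ) < ((1 + ‖t‖) / (1 + δ⁻¹)) ^ r := Real.rpow_pos_of_pos hq r
    have h4 : (‖t‖ ^ r)⁻¹ ≤ (((1 + ‖t‖) / (1 + δ⁻¹)) ^ r)⁻¹ :=
      inv_anti₀ h3 h2
    refine h4.trans (le_of_eq ?_)
    rw [Real.div_rpow (by positivity) hd.le, Real.rpow_neg (by positivity)]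
    field_simp
  · rw [indicator_of_notMem ht]
    simp only [norm_zero]
    positivity

private lemma far_kernel_even {N : ℕ} {r δ : ℝ} (t : Rn N) :
    Set.indicator {t : Rn N | δ ≤ ‖t‖} (fun t => (‖t‖ ^ r)⁻¹) (-t)
      = Set.indicator {t : Rn N | δ ≤ ‖t‖} (fun t => (‖t‖ ^ r)⁻¹) t := by
  simp [Set.indicator_apply, mem_setOf_eq, norm_neg]

private lemma integrable_mul_shift {N : ℕ} {h g : Rn N → ℝ} (hh : Integrable h)
    (hg : Integrable g) :
    Integrable (fun z : Rn N × Rn N => h z.2 * g (z.1 - z.2)) := by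
  rw [show (volume : Measure (Rn N × Rn N)) = (volume : Measure (Rn N)).prod volume from
    Measure.volume_eq_prod _ _]
  have mp : MeasurePreserving (fun z : Rn N × Rn N => (z.1 - z.2, z.2))
      ((volume : Measure (Rn N)).prod volume) ((volume : Measure (Rn N)).prod volume) :=
    measurePreserving_sub_prod volume volume
  have base : Integrable (fun z : Rn N × Rn N => g z.1 * h z.2)
      ((volume : Measure (Rn N)).prod volume) := hg.mul_prod hh
  have comp := (mp.integrable_comp base.aestronglyMeasurable).2 base
  have : ((fun z : Rn N × Rn N => g z.1 * h z.2) ∘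
      (fun z : Rn N × Rn N => (z.1 - z.2, z.2))) =
      fun z : Rn N × Rn N => h z.2 * g (z.1 - z.2) := by
    ext z; simp [Function.comp, mul_comm]
  rwa [this] at comp

private lemma integrable_mul_shift' {N : ℕ} {h g : Rn N → ℝ} (hh : Integrable h)
    (hg : Integrable g) (hge : ∀ t, g (-t) = g t) :
    Integrable (fun z : Rn N × Rn N => h z.1 * g (z.1 - z.2)) := by
  have base := integrable_mul_shift hh hg
  rw [show (volume : Measure (Rn N × Rn N)) = (volume : Measure (Rn N)).prod volume from
    Measure.volume_eq_prod _ _] at base ⊢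
  have mp : MeasurePreserving (Prod.swap : Rn N × Rn N → Rn N × Rn N)
      ((volume : Measure (Rn N)).prod volume) ((volume : Measure (Rn N)).prod volume) :=
    Measure.measurePreserving_swap
  have comp := (mp.integrable_comp base.aestronglyMeasurable).2 base
  have : ((fun z : Rn N × Rn N => h z.2 * g (z.1 - z.2)) ∘ Prod.swap) =
      fun z : Rn N × Rn N => h z.1 * g (z.1 - z.2) := by
    ext z
    simp only [Function.comp_apply, Prod.swap_prod_mk, Prod.fst_swap, Prod.snd_swap]
    rw [show z.2 - z.1 = -(z.1 - z.2) from (neg_sub z.1 z.2).symm, hge]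
  rwa [this] at comp
private lemma aesm_fst {N : ℕ} {f : Rn N → ℝ} (hf : AEStronglyMeasurable f volume) :
    AEStronglyMeasurable (fun z : Rn N × Rn N => f z.1) volume := by
  rw [show (volume : Measure (Rn N × Rn N)) = (volume : Measure (Rn N)).prod volume from
    Measure.volume_eq_prod _ _]
  exact hf.comp_fst

private lemma aesm_snd {N : ℕ} {f : Rn N → ℝ} (hf : AEStronglyMeasurable f volume) :
    AEStronglyMeasurable (fun z : Rn N × Rn N => f z.2) volume := by
  rw [show (volume : Measure (Rn N × Rn N)) = (volume : Measure (Rn N)).prod volume from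
    Measure.volume_eq_prod _ _]
  exact hf.comp_snd

private lemma aesm_energy {N : ℕ} {p s : ℝ} (hp : 1 < p) (hs : 0 < s)
    {φ : Rn N → ℝ} (hφm : AEMeasurable φ) :
    AEStronglyMeasurable (energyIntegrand N p s φ) volume := by
  have hr0 : (0:ℝ) ≤ (N : ℝ) + p * s := by positivity
  have hnum : AEMeasurable (fun z : Rn N × Rn N => |φ z.1 - φ z.2| ^ p) volume := by
    have h1 : AEMeasurable (fun z : Rn N × Rn N => φ z.1 - φ z.2) volume :=
      ((aesm_fst hφm.aestronglyMeasurable).sub (aesm_snd hφm.aestronglyMeasurable)).aemeasurable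
    exact (measurable_abs_rpow p).comp_aemeasurable h1
  have hden : Continuous fun z : Rn N × Rn N => ‖z.1 - z.2‖ ^ ((N : ℝ) + p * s) :=
    (Real.continuous_rpow_const hr0).comp (continuous_fst.sub continuous_snd).norm
  exact (hnum.div hden.measurable.aemeasurable).aestronglyMeasurable

private lemma aesm_gker {N : ℕ} {p s : ℝ} (hp : 1 < p) (hs : 0 < s)
    {u φ : Rn N → ℝ} (hum : AEMeasurable u) (hφm : AEMeasurable φ) :
    AEStronglyMeasurable (gker N p s u φ) volume := by
  have hr0 : (0:ℝ) ≤ (N : ℝ) + p * s := by positivity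
  have h1 : AEMeasurable (fun z : Rn N × Rn N => u z.1 - u z.2) volume :=
    ((aesm_fst hum.aestronglyMeasurable).sub (aesm_snd hum.aestronglyMeasurable)).aemeasurable
  have h2 : AEMeasurable (fun z : Rn N × Rn N => spow (u z.1 - u z.2) (p - 1)) volume :=
    (measurable_spow (p - 1)).comp_aemeasurable h1
  have h3 : AEMeasurable (fun z : Rn N × Rn N => φ z.1 - φ z.2) volume :=
    ((aesm_fst hφm.aestronglyMeasurable).sub (aesm_snd hφm.aestronglyMeasurable)).aemeasurable
  have hden : Continuous fun z : Rn N × Rn N => ‖z.1 - z.2‖ ^ ((N : ℝ) + p * s) :=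
    (Real.continuous_rpow_const hr0).comp (continuous_fst.sub continuous_snd).norm
  exact ((h2.mul h3).div hden.measurable.aemeasurable).aestronglyMeasurable

private lemma energy_nonneg {N : ℕ} {p s : ℝ} {φ : Rn N → ℝ} (z : Rn N × Rn N) :
    0 ≤ energyIntegrand N p s φ z :=
  div_nonneg (Real.rpow_nonneg (abs_nonneg _) _) (Real.rpow_nonneg (norm_nonneg _) _)

private lemma integrable_of_three {N : ℕ} {f : Rn N × Rn N → ℝ} {U : Set (Rn N)}
    (h1 : IntegrableOn f (U ×ˢ U)) (h2 : IntegrableOn f (Uᶜ ×ˢ (univ : Set (Rn N))))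
    (h3 : IntegrableOn f ((univ : Set (Rn N)) ×ˢ Uᶜ)) : Integrable f := by
  rw [← integrableOn_univ]
  refine ((h1.union h2).union h3).mono_set ?_
  intro z _
  by_cases hz1 : z.1 ∈ U
  · by_cases hz2 : z.2 ∈ U
    · exact Or.inl (Or.inl ⟨hz1, hz2⟩)
    · exact Or.inr ⟨mem_univ _, hz2⟩
  · exact Or.inl (Or.inr ⟨hz1, mem_univ _⟩)

private lemma offbound {p Cc : ℝ} (hp : 1 < p) {du a1 a2 b k gv tl : ℝ}
    (ha1 : 0 ≤ a1) (ha2 : 0 ≤ a2) (hb : 0 ≤ b) (hk : 0 ≤ k) (htl : 0 ≤ tl)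
    (hCc : 0 ≤ Cc)
    (hdu : du ≤ 2 ^ (p-1) * (a1 + a2)) (hkgv : k = gv) (hktl : k ≤ Cc * tl) :
    du * b * k ≤ 2 ^ (p-1) * Cc * (b * (a2 * tl)) + 2 ^ (p-1) * ((a1 * b) * gv) := by
  have hA : (0:ℝ) ≤ 2 ^ (p-1) := Real.rpow_nonneg (by norm_num) _
  have h1 : du * b * k ≤ (2^(p-1)*(a1+a2)) * b * k :=
    mul_le_mul_of_nonneg_right (mul_le_mul_of_nonneg_right hdu hb) hk
  have h2 : (2^(p-1)*(a1+a2)) * b * k = 2^(p-1)*((a1*b)*gv) + 2^(p-1)*(a2*b*k) := by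
    rw [← hkgv]; ring
  have h3 : 2^(p-1)*(a2*b*k) ≤ 2^(p-1)*Cc*(b*(a2*tl)) := by
    have h4 : a2*b*k ≤ a2*b*(Cc*tl) := mul_le_mul_of_nonneg_left hktl (mul_nonneg ha2 hb)
    calc 2^(p-1)*(a2*b*k) ≤ 2^(p-1)*(a2*b*(Cc*tl)) := mul_le_mul_of_nonneg_left h4 hA
      _ = 2^(p-1)*Cc*(b*(a2*tl)) := by ring
  linarith
private lemma integrable_energy_glob {N : ℕ} {p s : ℝ} (hp : 1 < p) (hs0 : 0 < s)
    {Ω U : Set (Rn N)} {φ : Rn N → ℝ} {δ : ℝ}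
    (hU : IsOpen U) (hΩU : Ω ⊆ U)
    (hφm : AEMeasurable φ)
    (hsupp : ∀ x, x ∉ Ω → φ x = 0)
    (hδ0 : 0 < δ)
    (hδd : ∀ x ∈ Ω, ∀ y ∉ U, δ ≤ ‖x - y‖)
    (hφp : Integrable (fun x => |φ x| ^ p))
    (hEφU : IntegrableOn (energyIntegrand N p s φ) (U ×ˢ U)) :
    Integrable (energyIntegrand N p s φ) := by
  set r : ℝ := (N : ℝ) + p * s with hr_def
  have hrN : (N : ℝ) < r := by
    have : 0 < p * s := by positivity
    simp only [hr_def]; linarith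
  have hEm : AEStronglyMeasurable (energyIntegrand N p s φ) volume := aesm_energy hp hs0 hφm
  set gk : Rn N → ℝ :=
    fun t => Set.indicator {t : Rn N | δ ≤ ‖t‖} (fun t => (‖t‖ ^ r)⁻¹) t with hgk_def
  have hgk : Integrable gk := integrable_far_kernel hrN hδ0
  have hgknn : ∀ t, 0 ≤ gk t := by
    intro t
    exact Set.indicator_nonneg (fun t _ => inv_nonneg.2 (Real.rpow_nonneg (norm_nonneg t) r)) t
  have hp0 : p ≠ 0 := by linarith
  -- region 1 : z.1 ∉ U
  have hreg1 : IntegrableOn (energyIntegrand N p s φ) (Uᶜ ×ˢ (univ : Set (Rn N))) := by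
    have hB : Integrable (fun z : Rn N × Rn N => |φ z.2| ^ p * gk (z.1 - z.2)) :=
      integrable_mul_shift hφp hgk
    have hms : MeasurableSet (Uᶜ ×ˢ (univ : Set (Rn N))) :=
      (hU.measurableSet.compl).prod MeasurableSet.univ
    refine (hB.integrableOn).mono' (hEm.restrict) ?_
    rw [ae_restrict_iff' hms]
    refine Eventually.of_forall fun z hz => ?_
    obtain ⟨hz1, -⟩ := hz
    have hx0 : φ z.1 = 0 := hsupp z.1 (fun h => hz1 (hΩU h))
    have hnn := energy_nonneg (p := p) (s := s) (φ := φ) z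
    rw [Real.norm_eq_abs, abs_of_nonneg hnn]
    unfold energyIntegrand
    rw [hx0]
    by_cases hy : z.2 ∈ Ω
    · have hδle : δ ≤ ‖z.1 - z.2‖ := by
        have := hδd z.2 hy z.1 hz1
        rwa [norm_sub_rev] at this
      have hgkeq : gk (z.1 - z.2) = (‖z.1 - z.2‖ ^ r)⁻¹ :=
        Set.indicator_of_mem (by exact hδle) _
      rw [hgkeq]
      rw [div_eq_mul_inv]
      apply mul_le_mul_of_nonneg_right _ (inv_nonneg.2 (Real.rpow_nonneg (norm_nonneg _) _))
      rw [zero_sub, abs_neg]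
    · have hy0 : φ z.2 = 0 := hsupp z.2 hy
      rw [hy0]
      simp only [sub_zero, abs_zero, Real.zero_rpow hp0, zero_div]
      simp [mul_nonneg, hgknn]
  -- region 2 : z.2 ∉ U
  have hreg2 : IntegrableOn (energyIntegrand N p s φ) ((univ : Set (Rn N)) ×ˢ Uᶜ) := by
    have hB : Integrable (fun z : Rn N × Rn N => |φ z.1| ^ p * gk (z.1 - z.2)) :=
      integrable_mul_shift' hφp hgk (fun t => far_kernel_even t)
    have hms : MeasurableSet ((univ : Set (Rn N)) ×ˢ Uᶜ) :=
      MeasurableSet.univ.prod (hU.measurableSet.compl)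
    refine (hB.integrableOn).mono' (hEm.restrict) ?_
    rw [ae_restrict_iff' hms]
    refine Eventually.of_forall fun z hz => ?_
    obtain ⟨-, hz2⟩ := hz
    have hy0 : φ z.2 = 0 := hsupp z.2 (fun h => hz2 (hΩU h))
    have hnn := energy_nonneg (p := p) (s := s) (φ := φ) z
    rw [Real.norm_eq_abs, abs_of_nonneg hnn]
    unfold energyIntegrand
    rw [hy0, sub_zero]
    by_cases hx : z.1 ∈ Ω
    · have hδle : δ ≤ ‖z.1 - z.2‖ := hδd z.1 hx z.2 hz2
      have hgkeq : gk (z.1 - z.2) = (‖z.1 - z.2‖ ^ r)⁻¹ :=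
        Set.indicator_of_mem (by exact hδle) _
      rw [hgkeq, div_eq_mul_inv]
    · have hx0 : φ z.1 = 0 := hsupp z.1 hx
      rw [hx0]
      simp only [abs_zero, Real.zero_rpow hp0, zero_div]
      simp [mul_nonneg, hgknn]
  exact integrable_of_three hEφU hreg1 hreg2
private lemma integrable_gker_glob {N : ℕ} {p s : ℝ} (hp : 1 < p) (hs0 : 0 < s)
    {Ω U : Set (Rn N)} {u φ : Rn N → ℝ} {δ R : ℝ}
    (hU : IsOpen U) (hΩU : Ω ⊆ U)
    (hum : AEMeasurable u) (hφm : AEMeasurable φ)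
    (hsupp : ∀ x, x ∉ Ω → φ x = 0)
    (hδ0 : 0 < δ) (hR0 : 0 ≤ R)
    (hδd : ∀ x ∈ Ω, ∀ y ∉ U, δ ≤ ‖x - y‖)
    (hRb : ∀ x ∈ Ω, ‖x‖ ≤ R)
    (htail : Integrable (fun x => |u x| ^ (p - 1) / (1 + ‖x‖) ^ ((N:ℝ) + p * s)))
    (hφ1 : Integrable (fun x => |φ x|))
    (hmix : Integrable (fun x => |u x| ^ (p - 1) * |φ x|))
    (hEuU : IntegrableOn (energyIntegrand N p s u) (U ×ˢ U))
    (hEφU : IntegrableOn (energyIntegrand N p s φ) (U ×ˢ U)) :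
    Integrable (gker N p s u φ) := by
  set q : ℝ := p - 1 with hq_def
  have hq0 : 0 < q := by simp only [hq_def]; linarith
  set r : ℝ := (N : ℝ) + p * s with hr_def
  have hrN : (N : ℝ) < r := by
    have : 0 < p * s := by positivity
    simp only [hr_def]; linarith
  have hr0 : (0:ℝ) ≤ r := le_trans (Nat.cast_nonneg N) hrN.le
  have hgm : AEStronglyMeasurable (gker N p s u φ) volume := aesm_gker hp hs0 hum hφm
  set gk : Rn N → ℝ :=
    fun t => Set.indicator {t : Rn N | δ ≤ ‖t‖} (fun t => (‖t‖ ^ r)⁻¹) t with hgk_def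
  have hgk : Integrable gk := integrable_far_kernel hrN hδ0
  -- geometry
  set c : ℝ := min (δ / (2 + 2*R + δ)) (1/2) with hc_def
  have hc0 : 0 < c := by
    apply lt_min _ (by norm_num)
    positivity
  have hgeo : ∀ x ∈ Ω, ∀ y ∉ U, c * (1 + ‖y‖) ≤ ‖x - y‖ := by
    intro x hx y hy
    have h1 : δ ≤ ‖x - y‖ := hδd x hx y hy
    have h2 : ‖y‖ - R ≤ ‖x - y‖ := by
      have h3 : ‖y‖ - ‖x‖ ≤ ‖y - x‖ := norm_sub_norm_le y x
      have h4 : ‖x‖ ≤ R := hRb x hx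
      rw [norm_sub_rev] at h3
      linarith
    rcases le_or_gt ‖y‖ (1 + 2*R + δ) with hy1 | hy1
    · have h5 : c * (1 + ‖y‖) ≤ (δ / (2 + 2*R + δ)) * (2 + 2*R + δ) := by
        apply mul_le_mul (min_le_left _ _) (by linarith) (by positivity) (by positivity)
      rw [div_mul_cancel₀ _ (by positivity : (2 + 2*R + δ) ≠ 0)] at h5
      linarith
    · have h5 : c * (1 + ‖y‖) ≤ (1/2) * (1 + ‖y‖) :=
        mul_le_mul_of_nonneg_right (min_le_right _ _) (by positivity)
      have : (1/2 : ℝ) * (1 + ‖y‖) ≤ ‖y‖ - R := by linarith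
      linarith
  set Cc : ℝ := (c ^ r)⁻¹ with hCc_def
  have hCc0 : 0 ≤ Cc := inv_nonneg.2 (Real.rpow_nonneg hc0.le r)
  -- inverse kernel bounds
  have hKey : ∀ x ∈ Ω, ∀ y ∉ U, (‖x - y‖ ^ r)⁻¹ ≤ Cc * ((1 + ‖y‖) ^ r)⁻¹ := by
    intro x hx y hy
    have h1 : c * (1 + ‖y‖) ≤ ‖x - y‖ := hgeo x hx y hy
    have hpos : (0:ℝ) < c * (1 + ‖y‖) := by positivity
    have h2 : (c * (1 + ‖y‖)) ^ r ≤ ‖x - y‖ ^ r := Real.rpow_le_rpow hpos.le h1 hr0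
    have h3 : (0:ℝ) < (c * (1 + ‖y‖)) ^ r := Real.rpow_pos_of_pos hpos r
    have h4 := inv_anti₀ h3 h2
    rwa [Real.mul_rpow hc0.le (by positivity), mul_inv] at h4
  have habs : ∀ z : Rn N × Rn N,
      |gker N p s u φ z| = |u z.1 - u z.2| ^ q * |φ z.1 - φ z.2| * (‖z.1 - z.2‖ ^ r)⁻¹ := by
    intro z
    unfold gker
    rw [abs_div, abs_mul, abs_spow hq0, abs_of_nonneg (Real.rpow_nonneg (norm_nonneg _) _),
      div_eq_mul_inv]
  -- region U ×ˢ U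
  have hregU : IntegrableOn (gker N p s u φ) (U ×ˢ U) := by
    refine ((hEuU.add hEφU)).mono' (hgm.restrict) ?_
    refine Eventually.of_forall fun z => ?_
    rw [Real.norm_eq_abs, habs z]
    have h1 : |u z.1 - u z.2| ^ q * |φ z.1 - φ z.2| ≤
        |u z.1 - u z.2| ^ p + |φ z.1 - φ z.2| ^ p :=
      rpow_mix_le hp (abs_nonneg _) (abs_nonneg _)
    have h2 : (0:ℝ) ≤ (‖z.1 - z.2‖ ^ r)⁻¹ :=
      inv_nonneg.2 (Real.rpow_nonneg (norm_nonneg _) _)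
    calc |u z.1 - u z.2| ^ q * |φ z.1 - φ z.2| * (‖z.1 - z.2‖ ^ r)⁻¹
        ≤ (|u z.1 - u z.2| ^ p + |φ z.1 - φ z.2| ^ p) * (‖z.1 - z.2‖ ^ r)⁻¹ :=
          mul_le_mul_of_nonneg_right h1 h2
      _ = energyIntegrand N p s u z + energyIntegrand N p s φ z := by
          unfold energyIntegrand
          rw [div_eq_mul_inv, div_eq_mul_inv, add_mul]
  -- region 2 : z.2 ∉ U  (support of φ at z.1)
  have hreg2 : IntegrableOn (gker N p s u φ) ((univ : Set (Rn N)) ×ˢ Uᶜ) := by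
    have hB1 : Integrable (fun z : Rn N × Rn N =>
        2^q * Cc * (|φ z.1| * (|u z.2| ^ q / (1 + ‖z.2‖) ^ r))) :=
      ((hφ1.mul_prod htail).const_mul (2^q * Cc))
    have hB2 : Integrable (fun z : Rn N × Rn N =>
        2^q * ((|u z.1| ^ q * |φ z.1|) * gk (z.1 - z.2))) :=
      (integrable_mul_shift' hmix hgk (fun t => far_kernel_even t)).const_mul _
    have hms : MeasurableSet ((univ : Set (Rn N)) ×ˢ Uᶜ) :=
      MeasurableSet.univ.prod (hU.measurableSet.compl)
    refine ((hB1.add hB2).integrableOn).mono' (hgm.restrict) ?_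
    rw [ae_restrict_iff' hms]
    refine Eventually.of_forall fun z hz => ?_
    obtain ⟨-, hz2⟩ := hz
    have hy0 : φ z.2 = 0 := hsupp z.2 (fun h => hz2 (hΩU h))
    have hBnn : 0 ≤ 2^q * Cc * (|φ z.1| * (|u z.2| ^ q / (1 + ‖z.2‖) ^ r))
        + 2^q * ((|u z.1| ^ q * |φ z.1|) * gk (z.1 - z.2)) := by
      have hg1 : 0 ≤ gk (z.1 - z.2) :=
        Set.indicator_nonneg (fun t _ => inv_nonneg.2 (Real.rpow_nonneg (norm_nonneg t) r)) _
      have h2q : (0:ℝ) ≤ 2^q := Real.rpow_nonneg (by norm_num) q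
      have := Real.rpow_nonneg (abs_nonneg (u z.1)) q
      have := Real.rpow_nonneg (abs_nonneg (u z.2)) q
      have := abs_nonneg (φ z.1)
      have hd : (0:ℝ) ≤ |u z.2| ^ q / (1 + ‖z.2‖) ^ r :=
        div_nonneg (Real.rpow_nonneg (abs_nonneg _) _) (Real.rpow_nonneg (by positivity) _)
      positivity
    rw [Real.norm_eq_abs, habs z]
    by_cases hx : z.1 ∈ Ω
    · have hδle : δ ≤ ‖z.1 - z.2‖ := hδd z.1 hx z.2 hz2
      have hgkeq : gk (z.1 - z.2) = (‖z.1 - z.2‖ ^ r)⁻¹ :=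
        Set.indicator_of_mem (by exact hδle) _
      have hkle : (‖z.1 - z.2‖ ^ r)⁻¹ ≤ Cc * ((1 + ‖z.2‖) ^ r)⁻¹ := hKey z.1 hx z.2 hz2
      have hdu : |u z.1 - u z.2| ^ q ≤ 2 ^ q * (|u z.1| ^ q + |u z.2| ^ q) :=
        abs_sub_rpow_le hq0 _ _
      rw [hy0, sub_zero]
      have hob := offbound (Cc := Cc) hp
        (Real.rpow_nonneg (abs_nonneg (u z.1)) q) (Real.rpow_nonneg (abs_nonneg (u z.2)) q)
        (abs_nonneg (φ z.1)) (inv_nonneg.2 (Real.rpow_nonneg (norm_nonneg _) _))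
        (inv_nonneg.2 (Real.rpow_nonneg (by positivity : (0:ℝ) ≤ 1 + ‖z.2‖) _)) hCc0
        hdu hgkeq.symm hkle
      refine hob.trans (le_of_eq ?_)
      simp only [Pi.add_apply, div_eq_mul_inv]; try ring
    · have hx0 : φ z.1 = 0 := hsupp z.1 hx
      rw [hx0, hy0]
      simpa using hBnn
  -- region 1 : z.1 ∉ U  (support of φ at z.2)
  have hreg1 : IntegrableOn (gker N p s u φ) (Uᶜ ×ˢ (univ : Set (Rn N))) := by
    have hB1 : Integrable (fun z : Rn N × Rn N =>
        2^q * Cc * ((|u z.1| ^ q / (1 + ‖z.1‖) ^ r) * |φ z.2|)) :=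
      ((htail.mul_prod hφ1).const_mul (2^q * Cc))
    have hB2 : Integrable (fun z : Rn N × Rn N =>
        2^q * ((|u z.2| ^ q * |φ z.2|) * gk (z.1 - z.2))) :=
      (integrable_mul_shift hmix hgk).const_mul _
    have hms : MeasurableSet (Uᶜ ×ˢ (univ : Set (Rn N))) :=
      (hU.measurableSet.compl).prod MeasurableSet.univ
    refine ((hB1.add hB2).integrableOn).mono' (hgm.restrict) ?_
    rw [ae_restrict_iff' hms]
    refine Eventually.of_forall fun z hz => ?_
    obtain ⟨hz1, -⟩ := hz
    have hx0 : φ z.1 = 0 := hsupp z.1 (fun h => hz1 (hΩU h))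
    have hBnn : 0 ≤ 2^q * Cc * ((|u z.1| ^ q / (1 + ‖z.1‖) ^ r) * |φ z.2|)
        + 2^q * ((|u z.2| ^ q * |φ z.2|) * gk (z.1 - z.2)) := by
      have hg1 : 0 ≤ gk (z.1 - z.2) :=
        Set.indicator_nonneg (fun t _ => inv_nonneg.2 (Real.rpow_nonneg (norm_nonneg t) r)) _
      have h2q : (0:ℝ) ≤ 2^q := Real.rpow_nonneg (by norm_num) q
      have := Real.rpow_nonneg (abs_nonneg (u z.2)) q
      have := abs_nonneg (φ z.2)
      have hd : (0:ℝ) ≤ |u z.1| ^ q / (1 + ‖z.1‖) ^ r :=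
        div_nonneg (Real.rpow_nonneg (abs_nonneg _) _) (Real.rpow_nonneg (by positivity) _)
      positivity
    rw [Real.norm_eq_abs, habs z]
    by_cases hy : z.2 ∈ Ω
    · have hδle : δ ≤ ‖z.1 - z.2‖ := by
        have := hδd z.2 hy z.1 hz1; rwa [norm_sub_rev] at this
      have hgkeq : gk (z.1 - z.2) = (‖z.1 - z.2‖ ^ r)⁻¹ :=
        Set.indicator_of_mem (by exact hδle) _
      have hkle : (‖z.1 - z.2‖ ^ r)⁻¹ ≤ Cc * ((1 + ‖z.1‖) ^ r)⁻¹ := by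
        have := hKey z.2 hy z.1 hz1
        rwa [norm_sub_rev] at this
      have hdu : |u z.1 - u z.2| ^ q ≤ 2 ^ q * (|u z.2| ^ q + |u z.1| ^ q) := by
        have := abs_sub_rpow_le hq0 (u z.1) (u z.2)
        linarith [this]
      rw [hx0, zero_sub, abs_neg]
      have hob := offbound (Cc := Cc) hp
        (Real.rpow_nonneg (abs_nonneg (u z.2)) q) (Real.rpow_nonneg (abs_nonneg (u z.1)) q)
        (abs_nonneg (φ z.2)) (inv_nonneg.2 (Real.rpow_nonneg (norm_nonneg _) _))
        (inv_nonneg.2 (Real.rpow_nonneg (by positivity : (0:ℝ) ≤ 1 + ‖z.1‖) _)) hCc0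
        hdu hgkeq.symm hkle
      refine hob.trans (le_of_eq ?_)
      simp only [Pi.add_apply, div_eq_mul_inv]; try ring
    · have hy0 : φ z.2 = 0 := hsupp z.2 hy
      rw [hx0, hy0]
      simpa using hBnn
  exact integrable_of_three hregU hreg1 hreg2

/-- Proposition 2.10: comparison principle. -/
theorem statement5 (N : ℕ) (hN : 1 ≤ N) (p s : ℝ) (hp : 1 < p) (hs : s ∈ Set.Ioo (0 : ℝ) 1)
    (Ω : Set (Rn N)) (hΩo : IsOpen Ω) (hΩb : Bornology.IsBounded Ω)
    (u v : Rn N → ℝ) (hu : memWtilde N p s Ω u) (hv : memWtilde N p s Ω v)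
    (hout : ∀ᵐ x, x ∉ Ω → u x ≤ v x)
    (hineq : ∀ φ : Rn N → ℝ, memW0 N p s Ω φ → (∀ᵐ x, 0 ≤ φ x) →
      (∫ z : Rn N × Rn N, gker N p s u φ z) ≤ ∫ z : Rn N × Rn N, gker N p s v φ z) :
    ∀ᵐ x, x ∈ Ω → u x ≤ v x := by
  obtain ⟨hs0, hs1⟩ := hs
  have hp0 : (0:ℝ) < p := by linarith
  have hp0' : p ≠ 0 := hp0.ne'
  have hq0 : (0:ℝ) < p - 1 := by linarith
  obtain ⟨hum, huK, ⟨Uu, hUuo, hUusub, huUp, huUE⟩, hut⟩ := hu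
  obtain ⟨hvm, hvK, ⟨Uv, hUvo, hUvsub, hvUp, hvUE⟩, hvt⟩ := hv
  set U : Set (Rn N) := Uu ∩ Uv with hU_def
  have hUo : IsOpen U := hUuo.inter hUvo
  have hclo : closure Ω ⊆ U := subset_inter hUusub hUvsub
  have hΩU : Ω ⊆ U := subset_closure.trans hclo
  have huUp' : IntegrableOn (fun x => |u x| ^ p) U := huUp.mono_set inter_subset_left
  have hvUp' : IntegrableOn (fun x => |v x| ^ p) U := hvUp.mono_set inter_subset_right
  have huUE' : IntegrableOn (energyIntegrand N p s u) (U ×ˢ U) :=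
    huUE.mono_set (prod_mono inter_subset_left inter_subset_left)
  have hvUE' : IntegrableOn (energyIntegrand N p s v) (U ×ˢ U) :=
    hvUE.mono_set (prod_mono inter_subset_right inter_subset_right)
  have hcpt : IsCompact (closure Ω) := hΩb.isCompact_closure
  obtain ⟨δ, hδ0, hδsub⟩ := hcpt.exists_thickening_subset_open hUo hclo
  have hδd : ∀ x ∈ Ω, ∀ y ∉ U, δ ≤ ‖x - y‖ := by
    intro x hx y hy
    by_contra hlt
    push_neg at hlt
    refine hy (hδsub ?_)
    rw [mem_thickening_iff]
    exact ⟨x, subset_closure hx, by rw [dist_eq_norm, norm_sub_rev]; exact hlt⟩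
  obtain ⟨R, hRsub⟩ := hΩb.subset_closedBall 0
  set R' : ℝ := max R 0 with hR'_def
  have hR0 : 0 ≤ R' := le_max_right _ _
  have hRb : ∀ x ∈ Ω, ‖x‖ ≤ R' := by
    intro x hx
    have h1 := hRsub hx
    rw [mem_closedBall, dist_zero_right] at h1
    exact le_trans h1 (le_max_left _ _)
  -- test function
  set w : Rn N → ℝ := fun x => u x - v x with hw_def
  set ψ : Rn N → ℝ := fun x => max (w x) 0 with hψ_def
  set φ : Rn N → ℝ := Set.indicator Ω ψ with hφ_def
  have hψm : AEMeasurable ψ volume :=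
    (hum.aemeasurable.sub hvm.aemeasurable).max aemeasurable_const
  have hφm : AEMeasurable φ volume := hψm.indicator hΩo.measurableSet
  have hψ0 : ∀ᵐ x, x ∉ Ω → ψ x = 0 :=
    hout.mono fun x hx hxΩ => max_eq_right (sub_nonpos.2 (hx hxΩ))
  have hφψ : ψ =ᵐ[volume] φ := by
    filter_upwards [hψ0] with x hx
    by_cases hxΩ : x ∈ Ω
    · rw [hφ_def, Set.indicator_of_mem hxΩ]
    · rw [hφ_def, Set.indicator_of_notMem hxΩ, hx hxΩ]
  have hφsupp : ∀ x, x ∉ Ω → φ x = 0 := fun x hx => Set.indicator_of_notMem hx _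
  have hψle : ∀ x, |ψ x| ≤ |w x| := by
    intro x
    have h := abs_max_sub_max_le_abs (w x) 0 0
    simpa using h
  -- integrability on Ω
  have huΩ : IntegrableOn (fun x => |u x| ^ p) Ω :=
    (huK (closure Ω) hcpt).mono_set subset_closure
  have hvΩ : IntegrableOn (fun x => |v x| ^ p) Ω :=
    (hvK (closure Ω) hcpt).mono_set subset_closure
  have hψp_aesm : AEStronglyMeasurable (fun x => |ψ x| ^ p) volume :=
    ((measurable_abs_rpow p).comp_aemeasurable hψm).aestronglyMeasurable
  have hψpΩ : IntegrableOn (fun x => |ψ x| ^ p) Ω := by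
    refine ((huΩ.add hvΩ).const_mul ((2:ℝ) ^ p)).mono' (hψp_aesm.restrict)
      (Eventually.of_forall fun x => ?_)
    rw [Real.norm_eq_abs, abs_of_nonneg (Real.rpow_nonneg (abs_nonneg _) _)]
    calc |ψ x| ^ p ≤ |w x| ^ p := Real.rpow_le_rpow (abs_nonneg _) (hψle x) hp0.le
      _ ≤ 2 ^ p * (|u x| ^ p + |v x| ^ p) := abs_sub_rpow_le hp0 (u x) (v x)
  have hφp : Integrable (fun x => |φ x| ^ p) := by
    have heq : (fun x => |φ x| ^ p) = Set.indicator Ω (fun x => |ψ x| ^ p) := by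
      ext x
      by_cases hx : x ∈ Ω
      · rw [Set.indicator_of_mem hx, hφ_def, Set.indicator_of_mem hx]
      · rw [Set.indicator_of_notMem hx, hφ_def, Set.indicator_of_notMem hx]
        simp [Real.zero_rpow hp0']
    rw [heq, integrable_indicator_iff hΩo.measurableSet]
    exact hψpΩ
  have hΩfin : volume Ω < ⊤ := hΩb.measure_lt_top
  have habs_le : ∀ a : ℝ, |a| ≤ 1 + |a| ^ p := by
    intro a
    rcases le_total |a| 1 with h | h
    · have := Real.rpow_nonneg (abs_nonneg a) p
      linarith
    · have h2 : |a| ^ (1:ℝ) ≤ |a| ^ p := Real.rpow_le_rpow_of_exponent_le h (by linarith)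
      rw [Real.rpow_one] at h2
      linarith
  have hψ1Ω : IntegrableOn (fun x => |ψ x|) Ω := by
    refine ((integrableOn_const (C := (1:ℝ)) hΩfin.ne).add hψpΩ).mono'
      ((continuous_abs.measurable.comp_aemeasurable hψm).aestronglyMeasurable.restrict)
      (Eventually.of_forall fun x => ?_)
    rw [Real.norm_eq_abs, abs_abs]
    simpa using habs_le (ψ x)
  have hφ1 : Integrable (fun x => |φ x|) := by
    have heq : (fun x => |φ x|) = Set.indicator Ω (fun x => |ψ x|) := by
      ext x
      by_cases hx : x ∈ Ω
      · rw [Set.indicator_of_mem hx, hφ_def, Set.indicator_of_mem hx]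
      · rw [Set.indicator_of_notMem hx, hφ_def, Set.indicator_of_notMem hx, abs_zero]
    rw [heq, integrable_indicator_iff hΩo.measurableSet]
    exact hψ1Ω
  have hmix : ∀ f : Rn N → ℝ, AEMeasurable f volume → IntegrableOn (fun x => |f x| ^ p) Ω →
      Integrable (fun x => |f x| ^ (p-1) * |φ x|) := by
    intro f hfm hfΩ
    have heq : (fun x => |f x| ^ (p-1) * |φ x|)
        = Set.indicator Ω (fun x => |f x| ^ (p-1) * |ψ x|) := by
      ext x
      by_cases hx : x ∈ Ω
      · rw [Set.indicator_of_mem hx, hφ_def, Set.indicator_of_mem hx]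
      · rw [Set.indicator_of_notMem hx, hφ_def, Set.indicator_of_notMem hx, abs_zero, mul_zero]
    rw [heq, integrable_indicator_iff hΩo.measurableSet]
    refine (hfΩ.add hψpΩ).mono'
      ((((measurable_abs_rpow (p-1)).comp_aemeasurable hfm).mul
        (continuous_abs.measurable.comp_aemeasurable hψm)).aestronglyMeasurable.restrict)
      (Eventually.of_forall fun x => ?_)
    rw [Real.norm_eq_abs, abs_of_nonneg (mul_nonneg (Real.rpow_nonneg (abs_nonneg _) _)
      (abs_nonneg _))]
    exact rpow_mix_le hp (abs_nonneg _) (abs_nonneg _)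
  have hmix_u : Integrable (fun x => |u x| ^ (p-1) * |φ x|) := hmix u hum.aemeasurable huΩ
  have hmix_v : Integrable (fun x => |v x| ^ (p-1) * |φ x|) := hmix v hvm.aemeasurable hvΩ
  -- energy of ψ on U ×ˢ U
  have hEψU : IntegrableOn (energyIntegrand N p s ψ) (U ×ˢ U) := by
    refine ((huUE'.add hvUE').const_mul ((2:ℝ) ^ p)).mono'
      ((aesm_energy hp hs0 hψm).restrict) (Eventually.of_forall fun z => ?_)
    rw [Real.norm_eq_abs, abs_of_nonneg (energy_nonneg z)]
    have h1 : |ψ z.1 - ψ z.2| ≤ |w z.1 - w z.2| := abs_max_sub_max_le_abs _ _ _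
    have h2 : |w z.1 - w z.2| = |(u z.1 - u z.2) - (v z.1 - v z.2)| := by
      rw [hw_def]; ring_nf
    have h3 : |ψ z.1 - ψ z.2| ^ p ≤ 2 ^ p * (|u z.1 - u z.2| ^ p + |v z.1 - v z.2| ^ p) := by
      calc |ψ z.1 - ψ z.2| ^ p ≤ |(u z.1 - u z.2) - (v z.1 - v z.2)| ^ p := by
            refine Real.rpow_le_rpow (abs_nonneg _) ?_ hp0.le
            rw [← h2]; exact h1
        _ ≤ 2 ^ p * (|u z.1 - u z.2| ^ p + |v z.1 - v z.2| ^ p) := abs_sub_rpow_le hp0 _ _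
    unfold energyIntegrand
    calc |ψ z.1 - ψ z.2| ^ p / ‖z.1 - z.2‖ ^ ((N:ℝ) + p * s)
        ≤ (2 ^ p * (|u z.1 - u z.2| ^ p + |v z.1 - v z.2| ^ p)) / ‖z.1 - z.2‖ ^ ((N:ℝ) + p * s) :=
          div_le_div_nonneg_denom h3 (Real.rpow_nonneg (norm_nonneg _) _)
      _ = 2 ^ p * (|u z.1 - u z.2| ^ p / ‖z.1 - z.2‖ ^ ((N:ℝ) + p * s)
            + |v z.1 - v z.2| ^ p / ‖z.1 - z.2‖ ^ ((N:ℝ) + p * s)) := by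
          rw [mul_div_assoc, add_div]
  have haeψφ : ∀ᵐ z : Rn N × Rn N, ψ z.1 = φ z.1 ∧ ψ z.2 = φ z.2 :=
    (ae_comp_fst hφψ).and (ae_comp_snd hφψ)
  have hEφU : IntegrableOn (energyIntegrand N p s φ) (U ×ˢ U) := by
    refine hEψU.congr (ae_restrict_of_ae (haeψφ.mono fun z hz => ?_))
    unfold energyIntegrand
    rw [hz.1, hz.2]
  -- global integrabilities
  have hEφ : Integrable (energyIntegrand N p s φ) :=
    integrable_energy_glob hp hs0 hUo hΩU hφm hφsupp hδ0 hδd hφp hEφU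
  have hGuφ : Integrable (gker N p s u φ) :=
    integrable_gker_glob hp hs0 hUo hΩU hum.aemeasurable hφm hφsupp hδ0 hR0 hδd hRb
      hut hφ1 hmix_u huUE' hEφU
  have hGvφ : Integrable (gker N p s v φ) :=
    integrable_gker_glob hp hs0 hUo hΩU hvm.aemeasurable hφm hφsupp hδ0 hR0 hδd hRb
      hvt hφ1 hmix_v hvUE' hEφU
  have hEψ : Integrable (energyIntegrand N p s ψ) := by
    refine hEφ.congr (haeψφ.mono fun z hz => ?_)
    unfold energyIntegrand
    rw [← hz.1, ← hz.2]
  have hGuψ : Integrable (gker N p s u ψ) := by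
    refine hGuφ.congr (haeψφ.mono fun z hz => ?_)
    unfold gker
    rw [← hz.1, ← hz.2]
  have hGvψ : Integrable (gker N p s v ψ) := by
    refine hGvφ.congr (haeψφ.mono fun z hz => ?_)
    unfold gker
    rw [← hz.1, ← hz.2]
  -- membership in W_0
  have hq_ne : (ENNReal.ofReal p) ≠ 0 := by
    rw [Ne, ENNReal.ofReal_eq_zero]
    push_neg
    exact hp0
  have hq_top : (ENNReal.ofReal p) ≠ ⊤ := ENNReal.ofReal_ne_top
  have hmem : memW0 N p s Ω ψ := by
    refine ⟨?_, hEψ, hψ0⟩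
    refine (memLp_norm_rpow_iff (p := ENNReal.ofReal p)
      hψm.aestronglyMeasurable hq_ne hq_top).1 ?_
    rw [ENNReal.div_self hq_ne hq_top, memLp_one_iff_integrable]
    have heq : (fun x : Rn N => ‖ψ x‖ ^ (ENNReal.ofReal p).toReal) = fun x => |ψ x| ^ p := by
      ext x
      rw [Real.norm_eq_abs, ENNReal.toReal_ofReal hp0.le]
    rw [heq]
    refine hφp.congr (hφψ.mono fun x hx => ?_)
    simp only [hx]
  have hle := hineq ψ hmem (Eventually.of_forall fun x => le_max_right _ _)
  -- conclusion via nonnegativity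
  set D : Rn N × Rn N → ℝ := fun z => gker N p s u ψ z - gker N p s v ψ z with hD_def
  have hDint : Integrable D := hGuψ.sub hGvψ
  have hψmono : ∀ z : Rn N × Rn N, ψ z.1 < ψ z.2 → w z.1 < w z.2 := by
    intro z h
    by_contra hge
    push_neg at hge
    exact absurd (max_le_max hge (le_refl (0:ℝ))) (not_le.2 h)
  have hDkey : ∀ z : Rn N × Rn N,
      0 ≤ (spow (u z.1 - u z.2) (p-1) - spow (v z.1 - v z.2) (p-1)) * (ψ z.1 - ψ z.2)
      ∧ (ψ z.1 ≠ ψ z.2 →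
        0 < (spow (u z.1 - u z.2) (p-1) - spow (v z.1 - v z.2) (p-1)) * (ψ z.1 - ψ z.2)) := by
    intro z
    rcases lt_trichotomy (ψ z.1) (ψ z.2) with h | h | h
    · have hww : w z.1 < w z.2 := hψmono z h
      have hAB : u z.1 - u z.2 < v z.1 - v z.2 := by
        have h5 : w z.1 - w z.2 < 0 := by linarith
        simp only [hw_def] at h5
        linarith
      have hsp := spow_lt_spow hq0 hAB
      have hpos : 0 < (spow (u z.1 - u z.2) (p-1) - spow (v z.1 - v z.2) (p-1)) *
          (ψ z.1 - ψ z.2) := mul_pos_of_neg_of_neg (by linarith) (by linarith)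
      exact ⟨hpos.le, fun _ => hpos⟩
    · rw [h]
      simp
    · have hww : w z.2 < w z.1 := hψmono ⟨z.2, z.1⟩ h
      have hAB : v z.1 - v z.2 < u z.1 - u z.2 := by
        have h5 : 0 < w z.1 - w z.2 := by linarith
        simp only [hw_def] at h5
        linarith
      have hsp := spow_lt_spow hq0 hAB
      have hpos : 0 < (spow (u z.1 - u z.2) (p-1) - spow (v z.1 - v z.2) (p-1)) *
          (ψ z.1 - ψ z.2) := mul_pos (by linarith) (by linarith)
      exact ⟨hpos.le, fun _ => hpos⟩
  have hDeq : ∀ z : Rn N × Rn N, D z =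
      (spow (u z.1 - u z.2) (p-1) - spow (v z.1 - v z.2) (p-1)) * (ψ z.1 - ψ z.2)
        / ‖z.1 - z.2‖ ^ ((N:ℝ) + p * s) := by
    intro z
    simp only [hD_def]
    unfold gker
    rw [div_sub_div_same, ← sub_mul]
  have hDnn : ∀ z, 0 ≤ D z := by
    intro z
    rw [hDeq z]
    exact div_nonneg (hDkey z).1 (Real.rpow_nonneg (norm_nonneg _) _)
  have hDpos : ∀ z : Rn N × Rn N, z.1 ≠ z.2 → ψ z.1 ≠ ψ z.2 → 0 < D z := by
    intro z hz hne
    rw [hDeq z]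
    refine div_pos ((hDkey z).2 hne) ?_
    refine Real.rpow_pos_of_pos ?_ _
    rw [norm_pos_iff]
    exact sub_ne_zero.2 hz
  have hint0 : ∫ z : Rn N × Rn N, D z = 0 := by
    have h1 : ∫ z : Rn N × Rn N, D z ≤ 0 := by
      rw [hD_def]
      rw [integral_sub hGuψ hGvψ]
      linarith
    have h2 : 0 ≤ ∫ z : Rn N × Rn N, D z := integral_nonneg hDnn
    linarith
  have hDae : ∀ᵐ z : Rn N × Rn N, D z = 0 :=
    ((integral_eq_zero_iff_of_nonneg hDnn hDint).1 hint0).mono fun z hz => hz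
  have hψeq : ∀ᵐ z : Rn N × Rn N, ψ z.1 = ψ z.2 := by
    filter_upwards [hDae, ae_offdiag N] with z h1 h2
    by_contra hne
    exact absurd h1 (ne_of_gt (hDpos z (h2 hN) hne))
  obtain ⟨cst, hcst⟩ := ae_const_of_ae_eq hN hψeq
  -- cst = 0
  set x₀ : Rn N := EuclideanSpace.single (⟨0, hN⟩ : Fin N) ((R' + 2 : ℝ)) with hx0_def
  have hx0norm : ‖x₀‖ = R' + 2 := by
    rw [hx0_def, EuclideanSpace.norm_single, Real.norm_eq_abs, abs_of_nonneg (by linarith)]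
  have hball : ∀ y ∈ ball x₀ 1, y ∉ Ω := by
    intro y hy hyΩ
    have h1 : ‖y‖ ≤ R' := hRb y hyΩ
    have h2 : dist x₀ y < 1 := by rw [dist_comm]; exact mem_ball.1 hy
    have h3 : ‖x₀‖ - ‖y‖ ≤ ‖x₀ - y‖ := norm_sub_norm_le _ _
    rw [← dist_eq_norm] at h3
    rw [hx0norm] at h3
    linarith
  have hfreq : ∃ᵐ y : Rn N, y ∈ ball x₀ 1 :=
    frequently_ae_mem_iff.2 (measure_ball_pos volume x₀ one_pos).ne'
  obtain ⟨y, hy1, hy2, hy3⟩ := (hfreq.and_eventually (hcst.and hψ0)).exists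
  have hc0 : cst = 0 := by
    rw [← hy2]
    exact hy3 (hball y hy1)
  filter_upwards [hcst] with x hx _
  rw [hc0] at hx
  have h2 : w x ≤ 0 := by
    have h3 := le_max_left (w x) (0:ℝ)
    rw [hψ_def] at hx
    simp only at hx
    linarith [hx ▸ h3]
  simp only [hw_def] at h2
  linarith

end
end

section
/- There exists a constant C > 0, depending only on p and s, such that for all real numbers x, ε with 0 < ε < x: |∫_{{y ∈ ℝ : |y−x| ≥ ε}} (x^s − (y₊)^s)^⟨p−1⟩ / |x−y|^{1+ps} dy| ≤ C · x^{−s} · (x^s − (x−ε)^s)/ε^s, where y₊ = max{y,0}. -/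
open MeasureTheory Metric Set Filter Topology

noncomputable section

namespace Stmt8

lemma spow_of_pos {t : ℝ} (ht : 0 < t) (q : ℝ) : spow t q = t ^ q := by
  rw [spow, abs_of_pos ht, ← Real.rpow_add_one ht.ne']
  ring_nf

lemma spow_of_neg {t : ℝ} (ht : t < 0) (q : ℝ) : spow t q = -((-t) ^ q) := by
  have h : (-t : ℝ) ≠ 0 := by linarith
  rw [spow, abs_of_neg ht, show ((-t)^(q-1) * t : ℝ) = -((-t)^(q-1) * (-t)) by ring,
    ← Real.rpow_add_one h, sub_add_cancel]

lemma spow_zero (q : ℝ) : spow 0 q = 0 := by simp [spow]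

lemma spow_one (q : ℝ) : spow 1 q = 1 := by simp [spow]

lemma spow_const_mul {c : ℝ} (hc : 0 < c) (t q : ℝ) :
    spow (c * t) q = c ^ q * spow t q := by
  rcases lt_trichotomy t 0 with ht | rfl | ht
  · rw [spow_of_neg (by nlinarith) q, spow_of_neg ht q,
      show -(c*t) = c * (-t) by ring, Real.mul_rpow hc.le (by linarith)]
    ring
  · simp [spow_zero]
  · rw [spow_of_pos (by positivity) q, spow_of_pos ht q, Real.mul_rpow hc.le ht.le]

def F (p s z : ℝ) : ℝ := spow (1 - max z 0 ^ s) (p - 1) / |1 - z| ^ (1 + p * s)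

def f2 (p s z : ℝ) : ℝ := (1 - z ^ s) ^ (p - 1) * (1 - z) ^ (-(1 + p * s))

def f2' (p s z : ℝ) : ℝ :=
  (1 - z ^ s) ^ (p - 1) * z ^ (s - 1) * (1 - z) ^ (-(1 + p * s))

variable {p s : ℝ}

/-- Bernoulli lower bound. -/
lemma sdelta_le (hs0 : 0 < s) (hs1 : s < 1) {δ : ℝ} (hδ0 : 0 < δ) (hδ1 : δ < 1) :
    s * δ ≤ 1 - (1 - δ) ^ s := by
  have h := rpow_one_add_le_one_add_mul_self (s := -δ) (by linarith) hs0.le hs1.le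
  rw [show (1 + -δ : ℝ) = 1 - δ by ring] at h
  nlinarith

lemma g_pos (hs0 : 0 < s) {δ : ℝ} (hδ0 : 0 < δ) (hδ1 : δ < 1) :
    0 < (1 - (1 - δ) ^ s) / δ ^ s := by
  have h1 : (1 - δ : ℝ) ^ s < 1 := Real.rpow_lt_one (by linarith) (by linarith) hs0
  have h2 : (0:ℝ) < δ ^ s := Real.rpow_pos_of_pos hδ0 s
  exact div_pos (by linarith) h2

lemma g_le_one (hs0 : 0 < s) (hs1 : s < 1) {δ : ℝ} (hδ0 : 0 < δ) (hδ1 : δ < 1) :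
    (1 - (1 - δ) ^ s) / δ ^ s ≤ 1 := by
  have h2 : (0:ℝ) < δ ^ s := Real.rpow_pos_of_pos hδ0 s
  rw [div_le_one h2]
  -- 1 ≤ δ^s + (1-δ)^s since a^s ≥ a on [0,1]
  have b1 : (δ:ℝ) ≤ δ ^ s := by
    have := Real.rpow_le_rpow_of_exponent_ge hδ0 hδ1.le hs1.le
    rwa [Real.rpow_one] at this
  have b2 : (1 - δ:ℝ) ≤ (1 - δ) ^ s := by
    have := Real.rpow_le_rpow_of_exponent_ge (x := 1 - δ) (by linarith) (by linarith) hs1.le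
    rwa [Real.rpow_one] at this
  linarith

/-- On `z < 1` the integrand is an honest positive power. -/
lemma F_eq_left (hp : 1 < p) (hs0 : 0 < s) (hs1 : s < 1) {z : ℝ} (hz : z < 1) :
    F p s z = (1 - max z 0 ^ s) ^ (p - 1) * (1 - z) ^ (-(1 + p * s)) := by
  have hm0 : (0:ℝ) ≤ max z 0 := le_max_right _ _
  have hm1 : max z 0 < 1 := by
    rcases le_or_gt z 0 with h | h
    · simpa [max_eq_right h] using one_pos
    · rw [max_eq_left h.le]; exact hz
  have hms : max z 0 ^ s < 1 := by
    rcases eq_or_lt_of_le hm0 with h | h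
    · rw [← h, Real.zero_rpow hs0.ne']; norm_num
    · exact Real.rpow_lt_one hm0 hm1 hs0
  have h1z : (0:ℝ) < 1 - z := by linarith
  rw [F, Stmt8.spow_of_pos (by linarith) (p-1), abs_of_pos h1z,
    Real.rpow_neg h1z.le, div_eq_mul_inv]

lemma F_eq_on_Iic0 (hp : 1 < p) (hs0 : 0 < s) (hs1 : s < 1) {z : ℝ} (hz : z ≤ 0) :
    F p s z = (1 - z) ^ (-(1 + p * s)) := by
  rw [F_eq_left hp hs0 hs1 (by linarith), max_eq_right hz, Real.zero_rpow hs0.ne']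
  norm_num

lemma aux_int_Iic0 (hp : 1 < p) (hs0 : 0 < s) :
    IntegrableOn (fun z : ℝ => (1 - z) ^ (-(1 + p * s))) (Iic 0) := by
  have hps : 0 < p * s := by nlinarith
  have base : IntegrableOn (fun t : ℝ => t ^ (-(1 + p * s))) (Ioi 1) :=
    integrableOn_Ioi_rpow_of_lt (by linarith) one_pos
  have himg : (fun w : ℝ => 1 - w) '' Ioi 1 = Iio 0 := by
    rw [Set.image_const_sub_Ioi]; norm_num
  have hder : ∀ w ∈ Ioi (1:ℝ), HasDerivWithinAt (fun w : ℝ => 1 - w) (-1 : ℝ) (Ioi 1) w := by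
    intro w _
    simpa using ((hasDerivAt_id w).const_sub (1:ℝ)).hasDerivWithinAt (s := Ioi 1)
  have hinj : InjOn (fun w : ℝ => 1 - w) (Ioi 1) := fun a _ b _ h => by
    dsimp at h; linarith
  have key : IntegrableOn (fun z : ℝ => (1 - z) ^ (-(1 + p * s)))
      ((fun w : ℝ => 1 - w) '' Ioi 1) := by
    rw [MeasureTheory.integrableOn_image_iff_integrableOn_abs_deriv_smul
      measurableSet_Ioi hder hinj]
    apply base.congr_fun _ measurableSet_Ioi
    intro w hw
    simp [sub_sub_cancel]
  rw [himg] at key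
  exact key.congr_set_ae Iio_ae_eq_Iic.symm

lemma integrable_F_Iic0 (hp : 1 < p) (hs0 : 0 < s) (hs1 : s < 1) :
    IntegrableOn (F p s) (Iic 0) := by
  exact (aux_int_Iic0 hp hs0).congr_fun
    (fun z hz => (F_eq_on_Iic0 hp hs0 hs1 hz).symm ▸ rfl) measurableSet_Iic

lemma integral_F_Iic0 (hp : 1 < p) (hs0 : 0 < s) (hs1 : s < 1) :
    ∫ z in Iic (0:ℝ), F p s z = 1 / (p * s) := by
  have hps : 0 < p * s := by nlinarith
  have h1 : ∫ z in Iic (0:ℝ), F p s z = ∫ z in Iic (0:ℝ), (1 - z) ^ (-(1 + p * s)) :=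
    setIntegral_congr_fun measurableSet_Iic (fun z hz => F_eq_on_Iic0 hp hs0 hs1 hz)
  rw [h1]
  have hderiv : ∀ z ∈ Iic (0:ℝ), HasDerivAt (fun z : ℝ => (1 - z) ^ (-(p * s)) / (p * s))
      ((1 - z) ^ (-(1 + p * s))) z := by
    intro z hz
    simp only [mem_Iic] at hz
    have h1z : (0:ℝ) < 1 - z := by linarith
    have hd : HasDerivAt (fun z : ℝ => (1 - z) ^ (-(p * s)))
        (-1 * -(p * s) * (1 - z) ^ (-(p * s) - 1)) z := by
      simpa using ((hasDerivAt_id z).const_sub (1:ℝ)).rpow_const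
        (p := -(p * s)) (Or.inl h1z.ne')
    have h2 := hd.div_const (p * s)
    refine h2.congr_deriv ?_
    rw [show (-1 * -(p*s) * (1-z) ^ (-(p*s)-1)) / (p*s) = (1-z) ^ (-(p*s)-1) by
      field_simp]
    congr 1
    ring
  have htend : Tendsto (fun z : ℝ => (1 - z) ^ (-(p * s)) / (p * s)) atBot (𝓝 0) := by
    have h1 : Tendsto (fun z : ℝ => 1 - z) atBot atTop := by
      apply tendsto_atTop_add_const_left
      exact tendsto_neg_atBot_atTop
    have h2 : Tendsto (fun z : ℝ => (1 - z) ^ (-(p * s))) atBot (𝓝 0) :=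
      (tendsto_rpow_neg_atTop hps).comp h1
    simpa using h2.div_const (p * s)
  have := MeasureTheory.integral_Iic_of_hasDerivAt_of_tendsto'
    hderiv (aux_int_Iic0 hp hs0) htend
  rw [this]
  norm_num [Real.one_rpow]

lemma integrable_f2 (hp : 1 < p) (hs0 : 0 < s) (hs1 : s < 1) {a : ℝ} (ha0 : 0 ≤ a)
    (ha1 : a < 1) : IntegrableOn (f2 p s) (Ioc 0 a) := by
  have c1 : ContinuousOn (fun z : ℝ => z ^ s) (Icc 0 a) :=
    continuousOn_id.rpow_const (fun x _ => Or.inr hs0.le)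
  have c2 : ContinuousOn (fun z : ℝ => (1 - z ^ s) ^ (p - 1)) (Icc 0 a) :=
    (continuousOn_const.sub c1).rpow_const (fun x _ => Or.inr (by linarith))
  have c3 : ContinuousOn (fun z : ℝ => (1 - z) ^ (-(1 + p * s))) (Icc 0 a) := by
    apply (continuousOn_const.sub continuousOn_id).rpow_const
    intro x hx
    exact Or.inl (by show (1:ℝ) - x ≠ 0; cases hx with | intro h1 h2 => exact (by linarith : (0:ℝ) < 1 - x).ne')
  exact ((c2.mul c3).integrableOn_compact isCompact_Icc).mono_set Ioc_subset_Icc_self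

lemma f2'_nonneg (hs0 : 0 < s) {z : ℝ} (hz0 : 0 ≤ z) (hz1 : z ≤ 1) : 0 ≤ f2' p s z := by
  unfold f2'
  have hzs : z ^ s ≤ 1 := Real.rpow_le_one hz0 hz1 hs0.le
  have e1 : 0 ≤ (1 - z ^ s) ^ (p - 1) := Real.rpow_nonneg (by linarith) _
  have e2 : 0 ≤ z ^ (s - 1) := Real.rpow_nonneg hz0 _
  have e3 : 0 ≤ (1 - z) ^ (-(1 + p * s)) := Real.rpow_nonneg (by linarith) _
  exact mul_nonneg (mul_nonneg e1 e2) e3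

lemma integrable_f2' (hp : 1 < p) (hs0 : 0 < s) (hs1 : s < 1) {a b : ℝ} (ha0 : 0 ≤ a)
    (hb1 : b < 1) : IntegrableOn (f2' p s) (Ioc a b) := by
  rcases le_or_gt b 0 with hb0 | hb0
  · have : Ioc a b ⊆ Ioc a 0 := Ioc_subset_Ioc le_rfl hb0
    have he : Ioc a b = ∅ ∨ True := by
      rcases eq_empty_or_nonempty (Ioc a b) with h | h
      · exact Or.inl h
      · exact Or.inr trivial
    rcases eq_empty_or_nonempty (Ioc a b) with h | h
    · rw [h]; exact integrableOn_empty
    · obtain ⟨x, hx⟩ := h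
      exact absurd (lt_of_lt_of_le (lt_of_le_of_lt ha0 hx.1) (hx.2.trans hb0)) (lt_irrefl 0)
  · have hsub : Ioc a b ⊆ Ioc 0 b := Ioc_subset_Ioc ha0 le_rfl
    refine IntegrableOn.mono_set ?_ hsub
    set M : ℝ := (1 - b) ^ (-(1 + p * s)) with hM
    have hMpos : 0 < M := Real.rpow_pos_of_pos (by linarith) _
    have hint : IntegrableOn (fun w : ℝ => M * w ^ (s - 1)) (Ioc 0 b) := by
      have := (intervalIntegral.intervalIntegrable_rpow' (a := 0) (b := b)
        (r := s - 1) (by linarith))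
      rw [intervalIntegrable_iff_integrableOn_Ioc_of_le hb0.le] at this
      exact this.const_mul M
    apply Integrable.mono' hint
    · apply Measurable.aestronglyMeasurable
      unfold f2'
      fun_prop
    · rw [ae_restrict_iff' measurableSet_Ioc]
      apply ae_of_all
      intro w hw
      obtain ⟨hw0, hwb⟩ := hw
      have hw1 : w < 1 := lt_of_le_of_lt hwb hb1
      have hzs : w ^ s ≤ 1 := Real.rpow_le_one hw0.le hw1.le hs0.le
      have hzs0 : 0 ≤ w ^ s := Real.rpow_nonneg hw0.le _
      have e1 : (1 - w ^ s) ^ (p - 1) ≤ 1 :=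
        Real.rpow_le_one (by linarith) (by linarith) (by linarith)
      have e1' : 0 ≤ (1 - w ^ s) ^ (p - 1) := Real.rpow_nonneg (by linarith) _
      have e2 : (1 - w) ^ (-(1 + p * s)) ≤ M := by
        apply Real.rpow_le_rpow_of_nonpos (by linarith) (by linarith)
        nlinarith
      have e2' : 0 ≤ (1 - w) ^ (-(1 + p * s)) := Real.rpow_nonneg (by linarith) _
      have e3 : 0 ≤ w ^ (s - 1) := Real.rpow_nonneg hw0.le _
      have hnn : 0 ≤ f2' p s w := f2'_nonneg hs0 hw0.le hw1.le
      rw [Real.norm_of_nonneg hnn]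
      unfold f2'
      calc (1 - w ^ s) ^ (p - 1) * w ^ (s - 1) * (1 - w) ^ (-(1 + p * s))
          ≤ 1 * w ^ (s - 1) * M := by
            apply mul_le_mul _ e2 e2' (by positivity)
            exact mul_le_mul e1 le_rfl e3 zero_le_one
        _ = M * w ^ (s - 1) := by ring



/-- The exact primitive computation. -/
lemma integral_f2_sub_f2' (hp : 1 < p) (hs0 : 0 < s) (hs1 : s < 1) {δ : ℝ}
    (hδ0 : 0 < δ) (hδ1 : δ < 1) :
    ∫ z in Ioc (0:ℝ) (1 - δ), (f2 p s z - f2' p s z) =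
      ((1 - (1 - δ) ^ s) / δ ^ s) ^ p / (p * s) - 1 / (p * s) := by
  have hps : 0 < p * s := by nlinarith
  set H : ℝ → ℝ := fun z => ((1 - z ^ s) * (1 - z) ^ (-s)) ^ p / (p * s) with hH
  have hab : (0:ℝ) ≤ 1 - δ := by linarith
  -- continuity of H on Icc
  have hcont : ContinuousOn H (Icc 0 (1 - δ)) := by
    apply ContinuousOn.div_const
    apply ContinuousOn.rpow_const
    · apply ContinuousOn.mul
      · exact continuousOn_const.sub
          (continuousOn_id.rpow_const (fun x _ => Or.inr hs0.le))
      · apply (continuousOn_const.sub continuousOn_id).rpow_const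
        intro x hx
        exact Or.inl (by show (1:ℝ) - x ≠ 0; cases hx with | intro h1 h2 => exact (by linarith : (0:ℝ) < 1 - x).ne')
    · intro x _
      exact Or.inr (by linarith)
  -- derivative of H
  have hderiv : ∀ z ∈ Ioo (0:ℝ) (1 - δ), HasDerivAt H (f2 p s z - f2' p s z) z := by
    intro z hz
    obtain ⟨hz0, hz1'⟩ := hz
    have hz1 : z < 1 := by linarith
    have hB : (0:ℝ) < 1 - z := by linarith
    have hzs1 : z ^ s < 1 := Real.rpow_lt_one hz0.le hz1 hs0
    have hA : (0:ℝ) < 1 - z ^ s := by linarith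
    have dA : HasDerivAt (fun z : ℝ => 1 - z ^ s) (-(s * z ^ (s - 1))) z :=
      (Real.hasDerivAt_rpow_const (Or.inl hz0.ne')).const_sub 1
    have dB : HasDerivAt (fun z : ℝ => (1 - z) ^ (-s)) (s * (1 - z) ^ (-s - 1)) z := by
      have := ((hasDerivAt_id z).const_sub (1:ℝ)).rpow_const (p := -s) (Or.inl hB.ne')
      convert this using 1
      simp only [id_eq]
      ring
      rfl
    have dh : HasDerivAt (fun z : ℝ => (1 - z ^ s) * (1 - z) ^ (-s))
        ((-(s * z ^ (s - 1))) * (1 - z) ^ (-s) + (1 - z ^ s) * (s * (1 - z) ^ (-s - 1)))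
        z := dA.mul dB
    have hhpos : (0:ℝ) < (1 - z ^ s) * (1 - z) ^ (-s) :=
      mul_pos hA (Real.rpow_pos_of_pos hB _)
    have dH := (dh.rpow_const (p := p) (Or.inl hhpos.ne')).div_const (p * s)
    refine dH.congr_deriv ?_
    symm
    -- now the algebraic identity
    set C := z ^ (s - 1) with hC
    set Bt := (1 - z) ^ (-(1 + p * s)) with hBt
    have fB1 : (1 - z) ^ (-s * (p - 1)) * (1 - z) ^ (-s) = Bt * (1 - z) := by
      rw [← Real.rpow_add hB, hBt, show -s * (p-1) + -s = (-(1 + p * s)) + 1 by ring,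
        Real.rpow_add_one hB.ne']
    have fB2 : (1 - z) ^ (-s * (p - 1)) * (1 - z) ^ (-s - 1) = Bt := by
      rw [← Real.rpow_add hB, hBt]; congr 1; ring
    have fz : z ^ s = C * z := by
      rw [hC, ← Real.rpow_add_one hz0.ne']; congr 1; ring
    have hmul : ((1 - z ^ s) * (1 - z) ^ (-s)) ^ (p - 1)
        = (1 - z ^ s) ^ (p - 1) * (1 - z) ^ (-s * (p - 1)) := by
      rw [Real.mul_rpow hA.le (Real.rpow_nonneg hB.le _),
        show (-s) * (p - 1) = -s * (p-1) by ring, Real.rpow_mul hB.le]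
    rw [hmul]
    unfold f2 f2'
    rw [← hBt, ← hC]
    have expand : (-(s * C) * (1 - z) ^ (-s) + (1 - z ^ s) * (s * (1 - z) ^ (-s - 1))) * p *
        ((1 - z ^ s) ^ (p - 1) * (1 - z) ^ (-s * (p - 1)))
        = (p * s) * ((1 - z ^ s) ^ (p - 1) *
          ((-C) * ((1 - z) ^ (-s * (p - 1)) * (1 - z) ^ (-s)) +
           (1 - z ^ s) * ((1 - z) ^ (-s * (p - 1)) * (1 - z) ^ (-s - 1)))) := by
      ring
    rw [expand, fB1, fB2]
    rw [mul_div_cancel_left₀ _ hps.ne']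
    rw [fz]
    ring
  -- apply FTC
  have hint : IntervalIntegrable (fun z => f2 p s z - f2' p s z) volume 0 (1 - δ) := by
    rw [intervalIntegrable_iff_integrableOn_Ioc_of_le hab]
    exact (integrable_f2 hp hs0 hs1 hab (by linarith)).sub
      (integrable_f2' hp hs0 hs1 le_rfl (by linarith))
  have hftc := intervalIntegral.integral_eq_sub_of_hasDeriv_right_of_le hab hcont
    (fun z hz => (hderiv z hz).hasDerivWithinAt) hint
  rw [intervalIntegral.integral_of_le hab] at hftc
  rw [hftc, hH]
  have hend : ((1 - (1 - δ) ^ s) * (1 - (1 - δ)) ^ (-s)) ^ p / (p * s)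
      = ((1 - (1 - δ) ^ s) / δ ^ s) ^ p / (p * s) := by
    rw [show (1 - (1 - δ) : ℝ) = δ by ring, Real.rpow_neg hδ0.le, ← div_eq_mul_inv]
  have hzero : ((1 - (0:ℝ) ^ s) * (1 - (0:ℝ)) ^ (-s)) ^ p / (p * s) = 1 / (p * s) := by
    rw [Real.zero_rpow hs0.ne']
    norm_num [Real.one_rpow]
  simp only [hend, hzero]


lemma right_img {δ : ℝ} (hδ0 : 0 < δ) :
    (fun w : ℝ => w⁻¹) '' Ioc 0 (1 + δ)⁻¹ = Ici (1 + δ) := by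
  have h1δ : (0:ℝ) < 1 + δ := by linarith
  ext y
  constructor
  · rintro ⟨w, ⟨hw0, hwb⟩, rfl⟩
    have h1 : (1 + δ) * w ≤ 1 := by
      calc (1 + δ) * w ≤ (1 + δ) * (1 + δ)⁻¹ := by
            exact mul_le_mul_of_nonneg_left hwb h1δ.le
        _ = 1 := mul_inv_cancel₀ h1δ.ne'
    show 1 + δ ≤ w⁻¹
    rw [← one_div, le_div_iff₀ hw0]
    linarith
  · intro hy
    rw [mem_Ici] at hy
    have hy0 : 0 < y := by linarith
    refine ⟨y⁻¹, ⟨by positivity, ?_⟩, inv_inv y⟩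
    rw [inv_le_inv₀ hy0 h1δ] at *
    exact hy

lemma right_pointwise (hs0 : 0 < s) {δ : ℝ} (hδ0 : 0 < δ) {w : ℝ}
    (hw : w ∈ Ioc (0:ℝ) (1 + δ)⁻¹) :
    |(-(w ^ 2)⁻¹)| * F p s w⁻¹ = -(f2' p s w) := by
  obtain ⟨hw0, hwb⟩ := hw
  have h1δ : (0:ℝ) < 1 + δ := by linarith
  have hb1 : (1 + δ : ℝ)⁻¹ < 1 := by
    rw [inv_lt_one_iff₀]; right; linarith
  have hw1 : w < 1 := lt_of_le_of_lt hwb hb1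
  have hws1 : w ^ s < 1 := Real.rpow_lt_one hw0.le hw1 hs0
  have hwsp : (0:ℝ) < w ^ s := Real.rpow_pos_of_pos hw0 s
  have hy1 : 1 < w⁻¹ := by
    rw [lt_inv_comm₀ one_pos hw0]; simpa using hw1
  have hmax : max w⁻¹ 0 = w⁻¹ := max_eq_left (by positivity)
  have hyS : (w⁻¹ : ℝ) ^ s = (w ^ s)⁻¹ := Real.inv_rpow hw0.le s
  have hti : 1 < (w ^ s)⁻¹ := by
    rw [lt_inv_comm₀ one_pos hwsp]; simpa using hws1
  have ht : 1 - (w ^ s)⁻¹ < 0 := by linarith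
  have hneg' : -(1 - (w ^ s)⁻¹) = (1 - w ^ s) * (w ^ s)⁻¹ := by
    field_simp
    ring
  have habs : |1 - w⁻¹| = (1 - w) * w⁻¹ := by
    rw [abs_of_neg (by linarith)]
    field_simp
    ring
  have hA0 : (0:ℝ) ≤ 1 - w ^ s := by linarith
  have e1 : ((1 - w ^ s) * (w ^ s)⁻¹) ^ (p - 1)
      = (1 - w ^ s) ^ (p - 1) * w ^ (-(s * (p - 1))) := by
    rw [Real.mul_rpow hA0 (by positivity), ← Real.rpow_neg hw0.le s,
      ← Real.rpow_mul hw0.le]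
    ring_nf
  have e2 : ((1 - w) * w⁻¹) ^ (1 + p * s)
      = (1 - w) ^ (1 + p * s) * w ^ (-(1 + p * s)) := by
    rw [Real.mul_rpow (by linarith) (by positivity), ← Real.rpow_neg_one w,
      ← Real.rpow_mul hw0.le]
    ring_nf
  have habs2 : |(-(w ^ 2)⁻¹)| = w ^ (-2 : ℝ) := by
    rw [abs_neg, abs_of_pos (by positivity), ← Real.rpow_natCast w 2,
      ← Real.rpow_neg hw0.le]
    norm_num
  rw [F, hmax, hyS, Stmt8.spow_of_neg ht, hneg', habs, e1, e2, habs2]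
  unfold f2'
  have hw2 : ((1 - w) ^ (1 + p * s))⁻¹ = (1 - w) ^ (-(1 + p * s)) :=
    (Real.rpow_neg (by linarith) _).symm
  have hw3 : (w ^ (-(1 + p * s)))⁻¹ = w ^ (1 + p * s) := by
    rw [← Real.rpow_neg hw0.le]; norm_num
  rw [div_eq_mul_inv, mul_inv, hw2, hw3]
  have hcollect : w ^ (-2:ℝ) * w ^ (-(s * (p - 1))) * w ^ (1 + p * s) = w ^ (s - 1) := by
    rw [← Real.rpow_add hw0, ← Real.rpow_add hw0]
    congr 1
    ring
  calc w ^ (-2:ℝ) * (-((1 - w ^ s) ^ (p - 1) * w ^ (-(s * (p - 1)))) *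
        ((1 - w) ^ (-(1 + p * s)) * w ^ (1 + p * s)))
      = -((1 - w ^ s) ^ (p - 1) *
          (w ^ (-2:ℝ) * w ^ (-(s * (p - 1))) * w ^ (1 + p * s)) *
          (1 - w) ^ (-(1 + p * s))) := by ring
    _ = -((1 - w ^ s) ^ (p - 1) * w ^ (s - 1) * (1 - w) ^ (-(1 + p * s))) := by
        rw [hcollect]

lemma integrable_F_Ici (hp : 1 < p) (hs0 : 0 < s) (hs1 : s < 1) {δ : ℝ}
    (hδ0 : 0 < δ) (hδ1 : δ < 1) :
    IntegrableOn (F p s) (Ici (1 + δ)) := by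
  have h1δ : (0:ℝ) < 1 + δ := by linarith
  have hb1 : (1 + δ : ℝ)⁻¹ < 1 := by rw [inv_lt_one_iff₀]; right; linarith
  rw [← right_img hδ0,
    MeasureTheory.integrableOn_image_iff_integrableOn_abs_deriv_smul
      measurableSet_Ioc
      (fun w hw => (hasDerivAt_inv (ne_of_gt hw.1)).hasDerivWithinAt)
      (inv_injective.injOn)]
  have : IntegrableOn (fun w => -(f2' p s w)) (Ioc (0:ℝ) (1 + δ)⁻¹) :=
    (integrable_f2' hp hs0 hs1 le_rfl hb1).neg
  apply this.congr_fun _ measurableSet_Ioc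
  intro w hw
  dsimp only
  rw [smul_eq_mul]
  exact (right_pointwise hs0 hδ0 hw).symm

lemma integral_F_Ici (hp : 1 < p) (hs0 : 0 < s) (hs1 : s < 1) {δ : ℝ}
    (hδ0 : 0 < δ) (hδ1 : δ < 1) :
    ∫ z in Ici (1 + δ), F p s z = -∫ w in Ioc (0:ℝ) (1 + δ)⁻¹, f2' p s w := by
  rw [← right_img hδ0,
    MeasureTheory.integral_image_eq_integral_abs_deriv_smul
      measurableSet_Ioc
      (fun w hw => (hasDerivAt_inv (ne_of_gt hw.1)).hasDerivWithinAt)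
      (inv_injective.injOn) (F p s)]
  rw [← MeasureTheory.integral_neg]
  apply setIntegral_congr_fun measurableSet_Ioc
  intro w hw
  dsimp only
  rw [smul_eq_mul]
  exact right_pointwise hs0 hδ0 hw

lemma Bterm_nonneg (hp : 1 < p) (hs0 : 0 < s) (hs1 : s < 1) {δ : ℝ}
    (hδ0 : 0 < δ) (hδ1 : δ < 1) :
    0 ≤ ∫ w in Ioc (1 - δ) (1 + δ)⁻¹, f2' p s w := by
  apply setIntegral_nonneg measurableSet_Ioc
  intro w hw
  obtain ⟨hw1, hw2⟩ := hw
  have hb1 : (1 + δ : ℝ)⁻¹ < 1 := by rw [inv_lt_one_iff₀]; right; linarith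
  exact f2'_nonneg hs0 (by linarith) (le_of_lt (lt_of_le_of_lt hw2 hb1))

lemma concave_diff (hs0 : 0 < s) (hs1 : s < 1) {a b : ℝ} (ha : 0 < a) (hab : a ≤ b) :
    b ^ s - a ^ s ≤ s * a ^ (s - 1) * (b - a) := by
  have hb : 0 < b := lt_of_lt_of_le ha hab
  have hba : (1 : ℝ) + (b / a - 1) = b / a := by ring
  have h := rpow_one_add_le_one_add_mul_self (s := b / a - 1)
    (by nlinarith [div_pos hb ha]) hs0.le hs1.le
  rw [hba] at h
  have hbs : b ^ s = a ^ s * (b / a) ^ s := by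
    rw [← Real.mul_rpow ha.le (by positivity)]
    congr 1
    field_simp
  have has : 0 < a ^ s := Real.rpow_pos_of_pos ha s
  have hpow : a ^ (s - 1) = a ^ s / a := Real.rpow_sub_one ha.ne' s
  calc b ^ s - a ^ s = a ^ s * ((b / a) ^ s - 1) := by rw [hbs]; ring
    _ ≤ a ^ s * (1 + s * (b / a - 1) - 1) := by
        apply mul_le_mul_of_nonneg_left _ has.le
        linarith
    _ = s * (a ^ s / a) * (b - a) := by field_simp; ring
    _ = s * a ^ (s - 1) * (b - a) := by rw [hpow]

set_option maxHeartbeats 1000000 in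
lemma Bterm_bound (hp : 1 < p) (hs0 : 0 < s) (hs1 : s < 1) {δ : ℝ}
    (hδ0 : 0 < δ) (hδ1 : δ < 1) :
    ∫ w in Ioc (1 - δ) (1 + δ)⁻¹, f2' p s w ≤
      2 ^ (3 + 2 * (p * s)) / s ^ 2 * ((1 - (1 - δ) ^ s) / δ ^ s) := by
  have hps : 0 < p * s := by nlinarith
  have h1δ : (0:ℝ) < 1 + δ := by linarith
  have ha0 : (0:ℝ) < 1 - δ := by linarith
  have hb1 : (1 + δ : ℝ)⁻¹ < 1 := by rw [inv_lt_one_iff₀]; right; linarith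
  have hb0 : (0:ℝ) < (1 + δ)⁻¹ := by positivity
  have hab : (1 - δ : ℝ) ≤ (1 + δ)⁻¹ := by
    rw [← one_div, le_div_iff₀ h1δ]
    nlinarith
  set g : ℝ := (1 - (1 - δ) ^ s) / δ ^ s with hg
  have hg0 : 0 ≤ g := (g_pos hs0 hδ0 hδ1).le
  have hgs : s * δ ^ (1 - s) ≤ g := by
    have h1 : s * δ ≤ 1 - (1 - δ) ^ s := sdelta_le hs0 hs1 hδ0 hδ1
    have hds : (0:ℝ) < δ ^ s := Real.rpow_pos_of_pos hδ0 s
    have h2 : δ ^ (1 - s) = δ / δ ^ s := by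
      rw [Real.rpow_sub hδ0, Real.rpow_one]
    rw [h2, hg, show s * (δ / δ ^ s) = s * δ / δ ^ s by ring]
    gcongr
  set K : ℝ := δ ^ (p - 1) * (δ / 2) ^ (-(1 + p * s)) with hK
  have hK0 : 0 < K := by
    have := Real.rpow_pos_of_pos hδ0 (p - 1)
    have := Real.rpow_pos_of_pos (show (0:ℝ) < δ / 2 by linarith) (-(1 + p * s))
    positivity
  -- pointwise bound
  have step1 : ∀ w ∈ Ioc (1 - δ) (1 + δ)⁻¹, f2' p s w ≤ K * w ^ (s - 1) := by
    intro w hw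
    obtain ⟨hwa, hwb⟩ := hw
    have hw0 : 0 < w := lt_trans ha0 hwa
    have hw1 : w < 1 := lt_of_le_of_lt hwb hb1
    have hwle : w ≤ w ^ s := by
      have := Real.rpow_le_rpow_of_exponent_ge hw0 hw1.le hs1.le
      rwa [Real.rpow_one] at this
    have hws1 : w ^ s ≤ 1 := Real.rpow_le_one hw0.le hw1.le hs0.le
    have h1w_le : 1 - w ≤ δ := by linarith
    have h1w_ge : δ / 2 ≤ 1 - w := by
      have hbb : (1 + δ:ℝ)⁻¹ ≤ 1 - δ / 2 := by
        rw [← one_div, div_le_iff₀ h1δ]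
        nlinarith
      linarith
    have e1 : (1 - w ^ s) ^ (p - 1) ≤ δ ^ (p - 1) :=
      Real.rpow_le_rpow (by linarith) (by linarith) (by linarith)
    have e3 : (1 - w) ^ (-(1 + p * s)) ≤ (δ / 2) ^ (-(1 + p * s)) :=
      Real.rpow_le_rpow_of_nonpos (by linarith) h1w_ge (by linarith)
    have e1' : 0 ≤ (1 - w ^ s) ^ (p - 1) := Real.rpow_nonneg (by nlinarith) _
    have e2' : 0 ≤ w ^ (s - 1) := Real.rpow_nonneg hw0.le _
    have e3' : 0 ≤ (1 - w) ^ (-(1 + p * s)) := Real.rpow_nonneg (by linarith) _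
    show (1 - w ^ s) ^ (p - 1) * w ^ (s - 1) * (1 - w) ^ (-(1 + p * s)) ≤ _
    calc (1 - w ^ s) ^ (p - 1) * w ^ (s - 1) * (1 - w) ^ (-(1 + p * s))
        ≤ δ ^ (p - 1) * w ^ (s - 1) * (δ / 2) ^ (-(1 + p * s)) := by
          apply mul_le_mul _ e3 e3' (by positivity)
          exact mul_le_mul e1 le_rfl e2' (by positivity)
      _ = K * w ^ (s - 1) := by rw [hK]; ring
  -- integral comparison
  have int1 : IntegrableOn (f2' p s) (Ioc (1 - δ) (1 + δ)⁻¹) volume :=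
    integrable_f2' hp hs0 hs1 ha0.le hb1
  have int2 : IntegrableOn (fun w : ℝ => K * w ^ (s - 1)) (Ioc (1 - δ) (1 + δ)⁻¹) := by
    have := (intervalIntegral.intervalIntegrable_rpow' (a := 1 - δ) (b := (1 + δ)⁻¹)
      (r := s - 1) (by linarith))
    rw [intervalIntegrable_iff_integrableOn_Ioc_of_le hab] at this
    exact this.const_mul K
  have step2 : ∫ w in Ioc (1 - δ) (1 + δ)⁻¹, f2' p s w ≤
      ∫ w in Ioc (1 - δ) (1 + δ)⁻¹, K * w ^ (s - 1) :=
    setIntegral_mono_on int1 int2 measurableSet_Ioc step1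
  have step3 : ∫ w in Ioc (1 - δ) (1 + δ)⁻¹, K * w ^ (s - 1) =
      K * ((((1 + δ)⁻¹) ^ s - (1 - δ) ^ s) / s) := by
    rw [integral_const_mul]
    congr 1
    rw [← intervalIntegral.integral_of_le hab,
      integral_rpow (Or.inl (by linarith : (-1:ℝ) < s - 1)),
      show s - 1 + 1 = s by ring]
  rw [step3] at step2
  refine le_trans step2 ?_
  -- now pure arithmetic estimates, case split on δ ≤ 1/2
  rcases le_or_gt δ (1/2) with hhalf | hhalf
  · -- small δ
    have d1 : ((1 + δ)⁻¹) ^ s - (1 - δ) ^ s ≤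
        s * (1 - δ) ^ (s - 1) * ((1 + δ)⁻¹ - (1 - δ)) := concave_diff hs0 hs1 ha0 hab
    have d2 : (1 - δ) ^ (s - 1) ≤ 2 := by
      calc (1 - δ) ^ (s - 1) ≤ (1/2 : ℝ) ^ (s - 1) :=
            Real.rpow_le_rpow_of_nonpos (by norm_num) (by linarith) (by linarith)
        _ = 2 ^ (1 - s) := by
            rw [show (1/2 : ℝ) = 2⁻¹ by norm_num,
              Real.inv_rpow (by norm_num), ← Real.rpow_neg (by norm_num)]
            norm_num
        _ ≤ 2 ^ (1:ℝ) := Real.rpow_le_rpow_of_exponent_le one_le_two (by linarith)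
        _ = 2 := Real.rpow_one 2
    have d3 : (1 + δ)⁻¹ - (1 - δ) ≤ δ ^ 2 := by
      rw [← one_div, sub_le_iff_le_add, div_le_iff₀ h1δ]
      nlinarith
    have dd : (((1 + δ)⁻¹) ^ s - (1 - δ) ^ s) / s ≤ 2 * δ ^ 2 := by
      rw [div_le_iff₀ hs0]
      have hnn : (0:ℝ) ≤ (1 + δ)⁻¹ - (1 - δ) := by linarith
      calc ((1 + δ)⁻¹) ^ s - (1 - δ) ^ s
          ≤ s * (1 - δ) ^ (s - 1) * ((1 + δ)⁻¹ - (1 - δ)) := d1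
        _ ≤ s * 2 * δ ^ 2 := by
            have h2 : (1 - δ) ^ (s - 1) * ((1 + δ)⁻¹ - (1 - δ)) ≤ 2 * δ ^ 2 :=
              mul_le_mul d2 d3 hnn (by norm_num)
            calc s * (1 - δ) ^ (s - 1) * ((1 + δ)⁻¹ - (1 - δ))
                = s * ((1 - δ) ^ (s - 1) * ((1 + δ)⁻¹ - (1 - δ))) := by ring
              _ ≤ s * (2 * δ ^ 2) := mul_le_mul_of_nonneg_left h2 hs0.le
              _ = s * 2 * δ ^ 2 := by ring
        _ = 2 * δ ^ 2 * s := by ring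
    have e4 : (δ / 2) ^ (-(1 + p * s)) = δ ^ (-(1 + p * s)) * 2 ^ (1 + p * s) := by
      rw [Real.div_rpow hδ0.le (by norm_num), Real.rpow_neg (by norm_num : (0:ℝ) ≤ 2)]
      field_simp
    have e_two : (2:ℝ) ^ (2 + p * s) = 2 ^ (1 + p * s) * 2 := by
      rw [show (2:ℝ) + p * s = (1 + p * s) + 1 by ring,
        Real.rpow_add_one (by norm_num : (2:ℝ) ≠ 0)]
    have e_delta : δ ^ (p - 1) * δ ^ (-(1 + p * s)) * δ ^ (2:ℝ) = δ ^ (p - p * s) := by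
      rw [← Real.rpow_add hδ0, ← Real.rpow_add hδ0]
      congr 1
      ring
    have e_sq : (δ:ℝ) ^ 2 = δ ^ (2:ℝ) := by
      rw [← Real.rpow_natCast δ 2]; norm_num
    have key : K * ((((1 + δ)⁻¹) ^ s - (1 - δ) ^ s) / s) ≤
        2 ^ (2 + p * s) * δ ^ (p - p * s) := by
      calc K * ((((1 + δ)⁻¹) ^ s - (1 - δ) ^ s) / s) ≤ K * (2 * δ ^ 2) :=
            mul_le_mul_of_nonneg_left dd hK0.le
        _ = 2 ^ (2 + p * s) * δ ^ (p - p * s) := by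
            rw [hK, e4, e_sq, e_two, ← e_delta]
            ring
    have e5 : δ ^ (p - p * s) ≤ δ ^ (1 - s) :=
      Real.rpow_le_rpow_of_exponent_ge hδ0 hδ1.le (by nlinarith)
    have e6 : δ ^ (1 - s) ≤ g / s := by
      rw [le_div_iff₀ hs0]
      linarith [hgs]
    calc K * ((((1 + δ)⁻¹) ^ s - (1 - δ) ^ s) / s)
        ≤ 2 ^ (2 + p * s) * δ ^ (p - p * s) := key
      _ ≤ 2 ^ (2 + p * s) * (g / s) := by
          apply mul_le_mul_of_nonneg_left (le_trans e5 e6) (by positivity)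
      _ ≤ 2 ^ (3 + 2 * (p * s)) / s ^ 2 * g := by
          rw [show (2:ℝ) ^ (2 + p * s) * (g / s) = 2 ^ (2 + p * s) / s * g by ring]
          apply mul_le_mul_of_nonneg_right _ hg0
          apply div_le_div₀ (by positivity)
            (Real.rpow_le_rpow_of_exponent_le one_le_two (by nlinarith)) (by positivity)
          nlinarith
  · -- large δ
    have d1 : ((1 + δ)⁻¹) ^ s - (1 - δ) ^ s ≤ 1 := by
      have h1 : ((1 + δ)⁻¹ : ℝ) ^ s ≤ 1 := Real.rpow_le_one hb0.le hb1.le hs0.le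
      have h2 : (0:ℝ) ≤ (1 - δ) ^ s := Real.rpow_nonneg ha0.le _
      linarith
    have d2 : K ≤ 2 ^ (2 + 2 * (p * s)) := by
      have k1 : δ ^ (p - 1) ≤ 1 := Real.rpow_le_one hδ0.le hδ1.le (by linarith)
      have k2 : (δ / 2) ^ (-(1 + p * s)) ≤ ((4:ℝ)⁻¹) ^ (-(1 + p * s)) :=
        Real.rpow_le_rpow_of_nonpos (by norm_num) (by linarith) (by linarith)
      have k3 : ((4:ℝ)⁻¹) ^ (-(1 + p * s)) = 2 ^ (2 + 2 * (p * s)) := by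
        rw [Real.inv_rpow (by norm_num), ← Real.rpow_neg (by norm_num : (0:ℝ) ≤ 4)]
        norm_num
        rw [show (4:ℝ) = 2 ^ (2:ℝ) by
              rw [show (2:ℝ) ^ (2:ℝ) = 2 ^ (2:ℕ) by rw [← Real.rpow_natCast 2 2]; norm_num]
              norm_num,
          ← Real.rpow_mul (by norm_num : (0:ℝ) ≤ 2)]
        congr 1
        ring
      have hk2' : (0:ℝ) ≤ (δ / 2) ^ (-(1 + p * s)) := Real.rpow_nonneg (by linarith) _
      calc K = δ ^ (p - 1) * (δ / 2) ^ (-(1 + p * s)) := hK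
        _ ≤ 1 * ((4:ℝ)⁻¹) ^ (-(1 + p * s)) := mul_le_mul k1 k2 hk2' zero_le_one
        _ = 2 ^ (2 + 2 * (p * s)) := by rw [one_mul, k3]
    have d3 : s / 2 ≤ g := by
      have h1 : (1/2 : ℝ) ^ (1 - s) ≤ δ ^ (1 - s) :=
        Real.rpow_le_rpow (by norm_num) hhalf.le (by linarith)
      have h2 : (1/2 : ℝ) ≤ (1/2 : ℝ) ^ (1 - s) := by
        have := Real.rpow_le_rpow_of_exponent_ge (x := (1/2:ℝ)) (by norm_num)
          (by norm_num) (show 1 - s ≤ 1 by linarith)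
        rwa [Real.rpow_one] at this
      nlinarith [hgs]
    have dnn : 0 ≤ (((1 + δ)⁻¹) ^ s - (1 - δ) ^ s) / s := by
      apply div_nonneg _ hs0.le
      have : (1 - δ:ℝ) ^ s ≤ ((1 + δ)⁻¹) ^ s := Real.rpow_le_rpow ha0.le hab hs0.le
      linarith
    calc K * ((((1 + δ)⁻¹) ^ s - (1 - δ) ^ s) / s)
        ≤ 2 ^ (2 + 2 * (p * s)) * (1 / s) := by
          apply mul_le_mul d2 _ dnn (by positivity)
          rw [div_le_div_iff₀ hs0 hs0, one_mul]
          nlinarith [d1, hs0]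
      _ = 2 ^ (3 + 2 * (p * s)) / s ^ 2 * (s / 2) := by
          rw [show (3:ℝ) + 2 * (p * s) = (2 + 2 * (p * s)) + 1 by ring,
            Real.rpow_add_one (by norm_num : (2:ℝ) ≠ 0)]
          field_simp
      _ ≤ 2 ^ (3 + 2 * (p * s)) / s ^ 2 * g := by
          apply mul_le_mul_of_nonneg_left d3 (by positivity)

lemma core (hp : 1 < p) (hs0 : 0 < s) (hs1 : s < 1) {δ : ℝ}
    (hδ0 : 0 < δ) (hδ1 : δ < 1) :
    IntegrableOn (F p s) {z : ℝ | δ ≤ |z - 1|} ∧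
      |∫ z in {z : ℝ | δ ≤ |z - 1|}, F p s z| ≤
        (1 / (p * s) + 2 ^ (3 + 2 * (p * s)) / s ^ 2) *
          ((1 - (1 - δ) ^ s) / δ ^ s) := by
  have hps : 0 < p * s := by nlinarith
  have h1δ : (0:ℝ) < 1 + δ := by linarith
  have hb1 : (1 + δ : ℝ)⁻¹ < 1 := by rw [inv_lt_one_iff₀]; right; linarith
  have hab : (1 - δ : ℝ) ≤ (1 + δ)⁻¹ := by
    rw [← one_div, le_div_iff₀ h1δ]
    nlinarith
  have hsetq : {z : ℝ | δ ≤ |z - 1|} = Iic (1 - δ) ∪ Ici (1 + δ) := by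
    ext z
    simp only [mem_setOf_eq, mem_union, mem_Iic, mem_Ici, le_abs]
    constructor
    · rintro (h | h)
      · right; linarith
      · left; linarith
    · rintro (h | h)
      · right; linarith
      · left; linarith
  have hFf2 : EqOn (F p s) (f2 p s) (Ioc 0 (1 - δ)) := by
    intro z hz
    rw [F_eq_left hp hs0 hs1 (by linarith [hz.2] : z < 1), max_eq_left hz.1.le]
    rfl
  have iM : IntegrableOn (F p s) (Ioc 0 (1 - δ)) :=
    (integrable_f2 hp hs0 hs1 (by linarith) (by linarith)).congr_fun
      (fun z hz => (hFf2 hz).symm) measurableSet_Ioc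
  have iL : IntegrableOn (F p s) (Iic (1 - δ)) := by
    rw [← Iic_union_Ioc_eq_Iic (by linarith : (0:ℝ) ≤ 1 - δ)]
    exact (integrable_F_Iic0 hp hs0 hs1).union iM
  have iR : IntegrableOn (F p s) (Ici (1 + δ)) := integrable_F_Ici hp hs0 hs1 hδ0 hδ1
  constructor
  · rw [hsetq]
    exact iL.union iR
  -- compute the integral
  have hdisj1 : Disjoint (Iic (1 - δ)) (Ici (1 + δ)) :=
    Iic_disjoint_Ici.mpr (by push_neg; linarith)
  have e0 : ∫ z in {z : ℝ | δ ≤ |z - 1|}, F p s z =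
      (∫ z in Iic (1 - δ), F p s z) + ∫ z in Ici (1 + δ), F p s z := by
    rw [hsetq, setIntegral_union hdisj1 measurableSet_Ici iL iR]
  have e1 : ∫ z in Iic (1 - δ), F p s z =
      1 / (p * s) + ∫ z in Ioc 0 (1 - δ), f2 p s z := by
    rw [← Iic_union_Ioc_eq_Iic (by linarith : (0:ℝ) ≤ 1 - δ),
      setIntegral_union (Iic_disjoint_Ioc le_rfl) measurableSet_Ioc
        (integrable_F_Iic0 hp hs0 hs1) iM,
      integral_F_Iic0 hp hs0 hs1,
      setIntegral_congr_fun measurableSet_Ioc hFf2]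
  have e2 : ∫ w in Ioc (0:ℝ) (1 + δ)⁻¹, f2' p s w =
      (∫ w in Ioc (0:ℝ) (1 - δ), f2' p s w) +
        ∫ w in Ioc (1 - δ) (1 + δ)⁻¹, f2' p s w := by
    rw [← Ioc_union_Ioc_eq_Ioc (by linarith : (0:ℝ) ≤ 1 - δ) hab,
      setIntegral_union (Ioc_disjoint_Ioc_of_le le_rfl) measurableSet_Ioc
        (integrable_f2' hp hs0 hs1 le_rfl (by linarith))
        (integrable_f2' hp hs0 hs1 (by linarith) hb1)]
  have e3 : (∫ z in Ioc (0:ℝ) (1 - δ), f2 p s z) - (∫ w in Ioc (0:ℝ) (1 - δ), f2' p s w)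
      = ((1 - (1 - δ) ^ s) / δ ^ s) ^ p / (p * s) - 1 / (p * s) := by
    rw [← integral_sub (integrable_f2 hp hs0 hs1 (by linarith) (by linarith))
      (integrable_f2' hp hs0 hs1 le_rfl (by linarith))]
    exact integral_f2_sub_f2' hp hs0 hs1 hδ0 hδ1
  set g : ℝ := (1 - (1 - δ) ^ s) / δ ^ s with hgdef
  set B : ℝ := ∫ w in Ioc (1 - δ) (1 + δ)⁻¹, f2' p s w with hBdef
  have etotal : ∫ z in {z : ℝ | δ ≤ |z - 1|}, F p s z = g ^ p / (p * s) - B := by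
    rw [e0, e1, integral_F_Ici hp hs0 hs1 hδ0 hδ1, e2]
    have := e3
    linarith [e3]
  rw [etotal]
  have hg0 : 0 < g := g_pos hs0 hδ0 hδ1
  have hg1 : g ≤ 1 := g_le_one hs0 hs1 hδ0 hδ1
  have hgp : g ^ p ≤ g := by
    have := Real.rpow_le_rpow_of_exponent_ge hg0 hg1 hp.le
    rwa [Real.rpow_one] at this
  have hgpnn : 0 ≤ g ^ p := Real.rpow_nonneg hg0.le p
  have hBnn : 0 ≤ B := Bterm_nonneg hp hs0 hs1 hδ0 hδ1
  have hBle : B ≤ 2 ^ (3 + 2 * (p * s)) / s ^ 2 * g := Bterm_bound hp hs0 hs1 hδ0 hδ1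
  have hq0 : 0 ≤ g ^ p / (p * s) := div_nonneg hgpnn hps.le
  calc |g ^ p / (p * s) - B| ≤ g ^ p / (p * s) + B := by
        rw [abs_le]
        constructor <;> linarith
    _ ≤ g / (p * s) + 2 ^ (3 + 2 * (p * s)) / s ^ 2 * g := by
        gcongr
    _ = (1 / (p * s) + 2 ^ (3 + 2 * (p * s)) / s ^ 2) * g := by ring

end Stmt8

/-- uniform estimate for the truncated fractional `p`-Laplacian of
`x ↦ (x₊)^s` on the half-line. -/
theorem statement8 (p s : ℝ) (hp : 1 < p) (hs : s ∈ Set.Ioo (0 : ℝ) 1) :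
    ∃ C > (0 : ℝ), ∀ x ε : ℝ, 0 < ε → ε < x →
      |∫ y in {y : ℝ | ε ≤ |y - x|},
          spow (x ^ s - (max y 0) ^ s) (p - 1) / |x - y| ^ (1 + p * s)| ≤
        C * x ^ (-s) * ((x ^ s - (x - ε) ^ s) / ε ^ s) := by
  obtain ⟨hs0, hs1⟩ := hs
  have hps : 0 < p * s := by nlinarith
  set C : ℝ := 1 / (p * s) + 2 ^ (3 + 2 * (p * s)) / s ^ 2 with hC
  have hC0 : 0 < C := by
    have h1 : 0 < 1 / (p * s) := by positivity
    have h2 : (0:ℝ) < 2 ^ (3 + 2 * (p * s)) / s ^ 2 := by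
      have := Real.rpow_pos_of_pos (show (0:ℝ) < 2 by norm_num) (3 + 2 * (p * s))
      positivity
    rw [hC]
    linarith
  refine ⟨C, hC0, ?_⟩
  intro x ε hε hεx
  have hx : 0 < x := lt_trans hε hεx
  set δ : ℝ := ε / x with hδ
  have hδ0 : 0 < δ := by positivity
  have hδ1 : δ < 1 := by rw [hδ, div_lt_one hx]; exact hεx
  set G : ℝ → ℝ := fun y =>
    spow (x ^ s - (max y 0) ^ s) (p - 1) / |x - y| ^ (1 + p * s) with hG
  have hTmeas : MeasurableSet {z : ℝ | δ ≤ |z - 1|} := by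
    apply IsClosed.measurableSet
    exact isClosed_le continuous_const ((continuous_id.sub continuous_const).abs)
  have himg : (fun z : ℝ => x * z) '' {z : ℝ | δ ≤ |z - 1|} = {y : ℝ | ε ≤ |y - x|} := by
    ext y
    constructor
    · rintro ⟨z, hz, rfl⟩
      have hz' : δ ≤ |z - 1| := hz
      show ε ≤ |x * z - x|
      have h0 : x * z - x = x * (z - 1) := by ring
      rw [h0, abs_mul, abs_of_pos hx]
      calc ε = x * δ := by rw [hδ]; field_simp
        _ ≤ x * |z - 1| := mul_le_mul_of_nonneg_left hz' hx.le
    · intro hy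
      have hy' : ε ≤ |y - x| := hy
      refine ⟨y / x, ?_, by field_simp⟩
      show δ ≤ |y / x - 1|
      have h0 : y / x - 1 = (y - x) / x := by field_simp
      rw [h0, abs_div, abs_of_pos hx, hδ]
      gcongr
  -- pointwise identity
  have hxs : (0:ℝ) < x ^ s := Real.rpow_pos_of_pos hx s
  have hpt : ∀ z : ℝ, |x| • G (x * z) = x ^ (-s) * Stmt8.F p s z := by
    intro z
    have hmax : max (x * z) 0 = x * max z 0 := by
      rcases le_total z 0 with h | h
      · rw [max_eq_right h, max_eq_right (by nlinarith : x * z ≤ 0), mul_zero]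
      · rw [max_eq_left h, max_eq_left (by positivity : 0 ≤ x * z)]
    have h1 : (x * max z 0) ^ s = x ^ s * (max z 0) ^ s :=
      Real.mul_rpow hx.le (le_max_right _ _)
    have h3 : spow (x ^ s * (1 - (max z 0) ^ s)) (p - 1)
        = (x ^ s) ^ (p - 1) * spow (1 - (max z 0) ^ s) (p - 1) :=
      Stmt8.spow_const_mul hxs _ _
    have h4 : |x - x * z| = x * |1 - z| := by
      rw [show x - x * z = x * (1 - z) by ring, abs_mul, abs_of_pos hx]
    have h5 : (x * |1 - z|) ^ (1 + p * s) = x ^ (1 + p * s) * |1 - z| ^ (1 + p * s) :=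
      Real.mul_rpow hx.le (abs_nonneg _)
    have h6 : (x ^ s) ^ (p - 1) = x ^ (s * (p - 1)) := (Real.rpow_mul hx.le s (p - 1)).symm
    have hfactor : x * (x ^ (s * (p - 1)) / x ^ (1 + p * s)) = x ^ (-s) := by
      rw [show (x : ℝ) * (x ^ (s * (p - 1)) / x ^ (1 + p * s))
          = x ^ (1:ℝ) * x ^ (s * (p - 1)) / x ^ (1 + p * s) by rw [Real.rpow_one]; ring,
        ← Real.rpow_add hx, ← Real.rpow_sub hx]
      congr 1
      ring
    rw [smul_eq_mul, abs_of_pos hx, hG]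
    show x * (spow (x ^ s - (max (x*z) 0) ^ s) (p - 1) / |x - x * z| ^ (1 + p * s)) = _
    rw [hmax, h1, show x ^ s - x ^ s * (max z 0) ^ s = x ^ s * (1 - (max z 0) ^ s) by ring,
      h3, h4, h5, h6, Stmt8.F]
    rw [mul_div_mul_comm]
    rw [← mul_assoc, ← hfactor]
  -- change of variables
  obtain ⟨hTint, hTbound⟩ := Stmt8.core hp hs0 hs1 hδ0 hδ1
  have hchg : ∫ y in {y : ℝ | ε ≤ |y - x|}, G y =
      x ^ (-s) * ∫ z in {z : ℝ | δ ≤ |z - 1|}, Stmt8.F p s z := by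
    rw [← himg, MeasureTheory.integral_image_eq_integral_abs_deriv_smul hTmeas
      (fun z _ => by
        simpa using ((hasDerivAt_id z).const_mul x).hasDerivWithinAt
          (s := {z : ℝ | δ ≤ |z - 1|}))
      (fun a _ b _ h => mul_left_cancel₀ hx.ne' h) G]
    rw [← integral_const_mul]
    exact setIntegral_congr_fun hTmeas (fun z _ => hpt z)
  -- final bound
  have hgeq : (1 - (1 - δ) ^ s) / δ ^ s = (x ^ s - (x - ε) ^ s) / ε ^ s := by
    have hd1 : (1 - δ : ℝ) = (x - ε) / x := by rw [hδ]; field_simp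
    have hd2 : ((x - ε) / x) ^ s = (x - ε) ^ s / x ^ s :=
      Real.div_rpow (by linarith) hx.le s
    have hd3 : (δ:ℝ) ^ s = ε ^ s / x ^ s := by
      rw [hδ, Real.div_rpow hε.le hx.le]
    have hεs : (0:ℝ) < ε ^ s := Real.rpow_pos_of_pos hε s
    rw [hd1, hd2, hd3]
    field_simp
  have hxs' : (0:ℝ) < x ^ (-s) := Real.rpow_pos_of_pos hx (-s)
  calc |∫ y in {y : ℝ | ε ≤ |y - x|}, G y|
      = x ^ (-s) * |∫ z in {z : ℝ | δ ≤ |z - 1|}, Stmt8.F p s z| := by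
        rw [hchg, abs_mul, abs_of_pos hxs']
    _ ≤ x ^ (-s) * (C * ((1 - (1 - δ) ^ s) / δ ^ s)) :=
        mul_le_mul_of_nonneg_left hTbound hxs'.le
    _ = C * x ^ (-s) * ((x ^ s - (x - ε) ^ s) / ε ^ s) := by
        rw [hgeq]
        ring

end
end

section
/- (L^∞ bound) For every d > 0 there exists a constant C_d > 0, depending only on N, p, s and d, with the following property: if Ω ⊂ ℝ^N is a bounded open set with diameter at most d, K > 0, and u ∈ W^{s,p}_0(Ω) satisfies, weakly in Ω, both (−Δ)^s_p u ≤ K and (−Δ)^s_p u ≥ −K, then ‖u‖_{L^∞(ℝ^N)} ≤ (C_d · K)^{1/(p−1)}. -/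
open MeasureTheory Metric Set Filter Topology

noncomputable section

namespace Aux13

lemma spow_neg (a q : ℝ) : spow (-a) q = - spow a q := by
  unfold spow; rw [abs_neg]; ring

lemma rpow_sub_one_mul_self {a : ℝ} (ha : 0 ≤ a) {q : ℝ} (hq : 0 < q) :
    a ^ (q - 1) * a = a ^ q := by
  rcases eq_or_lt_of_le ha with h | h
  · rw [← h, Real.zero_rpow hq.ne', mul_zero]
  · rw [← Real.rpow_add_one h.ne' (q - 1), sub_add_cancel]

lemma abs_spow (a : ℝ) {q : ℝ} (hq : 0 < q) : |spow a q| = |a| ^ q := by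
  rw [spow, abs_mul, abs_of_nonneg (Real.rpow_nonneg (abs_nonneg a) _)]
  exact rpow_sub_one_mul_self (abs_nonneg a) hq

lemma spow_of_pos {a : ℝ} (ha : 0 < a) (q : ℝ) (hq : 0 < q) : spow a q = a ^ q := by
  rw [spow, abs_of_pos ha]
  exact rpow_sub_one_mul_self ha.le hq

lemma div_le_div_nonneg_denom {a b c : ℝ} (h : a ≤ b) (hc : 0 ≤ c) : a / c ≤ b / c := by
  rcases eq_or_lt_of_le hc with h0 | h0
  · simp [← h0]
  · exact (div_le_div_iff_of_pos_right h0).mpr h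

lemma measurable_spow (q : ℝ) : Measurable fun a : ℝ => spow a q :=
  ((measurable_id.abs).pow_const _).mul measurable_id

/-- The pairing integrand against `(u-m)⁺` is pointwise nonnegative. -/
lemma gker_trunc_nonneg (N : ℕ) (p s : ℝ) (u : Rn N → ℝ) (m : ℝ) (z : Rn N × Rn N) :
    0 ≤ gker N p s u (fun x => max (u x - m) 0) z := by
  unfold gker
  apply div_nonneg _ (Real.rpow_nonneg (norm_nonneg _) _)
  rcases le_total (u z.1) (u z.2) with h | h
  · have h1 : spow (u z.1 - u z.2) (p - 1) ≤ 0 :=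
      mul_nonpos_of_nonneg_of_nonpos (Real.rpow_nonneg (abs_nonneg _) _) (by linarith)
    have h2 : max (u z.1 - m) 0 - max (u z.2 - m) 0 ≤ 0 :=
      sub_nonpos.mpr (max_le_max (by linarith) le_rfl)
    exact mul_nonneg_iff.mpr (Or.inr ⟨h1, h2⟩)
  · have h1 : 0 ≤ spow (u z.1 - u z.2) (p - 1) :=
      mul_nonneg (Real.rpow_nonneg (abs_nonneg _) _) (by linarith)
    have h2 : 0 ≤ max (u z.1 - m) 0 - max (u z.2 - m) 0 :=
      sub_nonneg.mpr (max_le_max (by linarith) le_rfl)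
    exact mul_nonneg h1 h2

/-- The constant. -/
def Cd (N : ℕ) (p s d : ℝ) : ℝ :=
  2 * (4 * d) ^ ((N : ℝ) + p * s) / (volume (ball (0 : Rn N) (d / 2))).toReal

lemma ballvol_pos (N : ℕ) {d : ℝ} (hd : 0 < d) :
    0 < (volume (ball (0 : Rn N) (d / 2))).toReal :=
  ENNReal.toReal_pos (measure_ball_pos volume _ (by linarith)).ne' measure_ball_lt_top.ne

lemma Cd_pos (N : ℕ) {p s d : ℝ} (hd : 0 < d) : 0 < Cd N p s d := by
  have h1 := ballvol_pos N hd
  have h2 : (0:ℝ) < (4 * d) ^ ((N : ℝ) + p * s) := Real.rpow_pos_of_pos (by linarith) _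
  exact div_pos (by linarith) h1

lemma key_upper (N : ℕ) (hN : 0 < N) (p s : ℝ) (hp : 1 < p) (hs : 0 < s)
    (d : ℝ) (hd : 0 < d) (Ω : Set (Rn N)) (hΩo : IsOpen Ω) (hΩb : Bornology.IsBounded Ω)
    (hdiam : Metric.diam Ω ≤ d) (K : ℝ) (hK : 0 < K) (u : Rn N → ℝ) (hu : memW0 N p s Ω u)
    (hle : weakLE N p s Ω u (fun _ => K)) :
    ∀ᵐ x, u x ≤ (Cd N p s d * K) ^ (1 / (p - 1)) := by
  have hp1 : (0:ℝ) < p - 1 := by linarith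
  have hC : 0 < Cd N p s d := Cd_pos N hd
  set m : ℝ := (Cd N p s d * K) ^ (1 / (p - 1)) with hm_def
  have hm : 0 < m := Real.rpow_pos_of_pos (by positivity) _
  have hmp : m ^ (p - 1) = Cd N p s d * K := by
    rw [hm_def, ← Real.rpow_mul (by positivity), one_div_mul_cancel hp1.ne', Real.rpow_one]
  rcases Set.eq_empty_or_nonempty Ω with hempty | ⟨x₀, hx₀⟩
  · filter_upwards [hu.2.2] with x hx
    rw [hx (by simp [hempty])]; exact hm.le
  -- notation
  set e : ℝ := (N : ℝ) + p * s with he_def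
  have he : 0 ≤ e := by positivity
  set v : Rn N → ℝ := fun x => max (u x - m) 0 with hv_def
  have hv0 : ∀ x, 0 ≤ v x := fun x => le_max_right _ _
  have hzu : ∀ᵐ x, x ∉ Ω → u x = 0 := hu.2.2
  have hvz : ∀ᵐ x, x ∉ Ω → v x = 0 := by
    filter_upwards [hzu] with x hx hxn
    rw [hv_def]; simp only; rw [hx hxn]; exact max_eq_right (by linarith)
  have huae : AEStronglyMeasurable u volume := hu.1.1
  have hvm : AEStronglyMeasurable v volume :=
    ((continuous_id.sub continuous_const).max continuous_const).comp_aestronglyMeasurable huae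
  have hvabs : ∀ x, ‖v x‖ ≤ ‖u x‖ := by
    intro x
    rw [Real.norm_eq_abs, Real.norm_eq_abs, abs_of_nonneg (hv0 x)]
    exact max_le (by linarith [le_abs_self (u x)]) (abs_nonneg _)
  have hvlip : ∀ x y : Rn N, |v x - v y| ≤ |u x - u y| := by
    intro x y
    have := abs_max_sub_max_le_abs (u x - m) (u y - m) 0
    simpa [sub_sub_sub_cancel_right] using this
  have hvp : MemLp v (ENNReal.ofReal p) volume :=
    MemLp.of_le hu.1 hvm (Eventually.of_forall hvabs)
  -- integrability of v
  have hT : volume {x | ¬ (x ∉ Ω → u x = 0)} = 0 := hzu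
  have hv_int : Integrable v volume := by
    refine memLp_one_iff_integrable.mp
      (hvp.mono_exponent_of_measure_support_ne_top
        (s := Ω ∪ {x | ¬ (x ∉ Ω → u x = 0)}) (fun x hx => ?_) ?_
        (ENNReal.one_le_ofReal.mpr hp.le))
    · simp only [mem_union, not_or] at hx
      have hux : u x = 0 := by
        by_contra h
        exact hx.2 (by simp [hx.1, h])
      rw [hv_def]; simp only; rw [hux]; exact max_eq_right (by linarith)
    · refine (lt_of_le_of_lt (measure_union_le _ _) ?_).ne
      rw [hT, add_zero]; exact hΩb.measure_lt_top
  -- measurability on the product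
  have hkm : Measurable fun z : Rn N × Rn N => ‖z.1 - z.2‖ ^ e :=
    ((measurable_fst.sub measurable_snd).norm).pow_const _
  have hu1m : AEMeasurable (fun z : Rn N × Rn N => u z.1) volume := by
    rw [Measure.volume_eq_prod]
    exact huae.aemeasurable.comp_quasiMeasurePreserving Measure.quasiMeasurePreserving_fst
  have hu2m : AEMeasurable (fun z : Rn N × Rn N => u z.2) volume := by
    rw [Measure.volume_eq_prod]
    exact huae.aemeasurable.comp_quasiMeasurePreserving Measure.quasiMeasurePreserving_snd
  have hv1m : AEMeasurable (fun z : Rn N × Rn N => v z.1) volume := by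
    rw [Measure.volume_eq_prod]
    exact hvm.aemeasurable.comp_quasiMeasurePreserving Measure.quasiMeasurePreserving_fst
  have hv2m : AEMeasurable (fun z : Rn N × Rn N => v z.2) volume := by
    rw [Measure.volume_eq_prod]
    exact hvm.aemeasurable.comp_quasiMeasurePreserving Measure.quasiMeasurePreserving_snd
  -- v ∈ W^{s,p}_0
  have hvW0 : memW0 N p s Ω v := by
    refine ⟨hvp, ?_, hvz⟩
    have hmeas : AEStronglyMeasurable (energyIntegrand N p s v) volume := by
      refine AEMeasurable.aestronglyMeasurable ?_
      exact (((measurable_id.abs.pow_const p).comp_aemeasurable (hv1m.sub hv2m)).div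
        hkm.aemeasurable)
    refine hu.2.1.mono hmeas (Eventually.of_forall fun z => ?_)
    have h1 : 0 ≤ energyIntegrand N p s v z :=
      div_nonneg (Real.rpow_nonneg (abs_nonneg _) _) (Real.rpow_nonneg (norm_nonneg _) _)
    have h2 : 0 ≤ energyIntegrand N p s u z :=
      div_nonneg (Real.rpow_nonneg (abs_nonneg _) _) (Real.rpow_nonneg (norm_nonneg _) _)
    rw [Real.norm_eq_abs, Real.norm_eq_abs, abs_of_nonneg h1, abs_of_nonneg h2]
    unfold energyIntegrand
    exact div_le_div_nonneg_denom
      (Real.rpow_le_rpow (abs_nonneg _) (hvlip _ _) (by linarith))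
      (Real.rpow_nonneg (norm_nonneg _) _)
  -- integrability of gker
  have hgm : AEMeasurable (gker N p s u v) volume := by
    exact (((measurable_spow (p - 1)).comp_aemeasurable (hu1m.sub hu2m)).mul
      (hv1m.sub hv2m)).div hkm.aemeasurable
  have hgker_int : Integrable (gker N p s u v) volume := by
    refine hu.2.1.mono hgm.aestronglyMeasurable (Eventually.of_forall fun z => ?_)
    have h2 : 0 ≤ energyIntegrand N p s u z :=
      div_nonneg (Real.rpow_nonneg (abs_nonneg _) _) (Real.rpow_nonneg (norm_nonneg _) _)
    rw [Real.norm_eq_abs, Real.norm_eq_abs, abs_of_nonneg h2]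
    unfold gker energyIntegrand
    rw [abs_div, abs_of_nonneg (Real.rpow_nonneg (norm_nonneg _) _), abs_mul,
      abs_spow _ hp1]
    have hb : |u z.1 - u z.2| ^ (p - 1) * |v z.1 - v z.2| ≤ |u z.1 - u z.2| ^ p := by
      calc |u z.1 - u z.2| ^ (p - 1) * |v z.1 - v z.2|
          ≤ |u z.1 - u z.2| ^ (p - 1) * |u z.1 - u z.2| :=
            mul_le_mul_of_nonneg_left (hvlip _ _) (Real.rpow_nonneg (abs_nonneg _) _)
        _ = |u z.1 - u z.2| ^ p := rpow_sub_one_mul_self (abs_nonneg _) (by linarith)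
    exact div_le_div_nonneg_denom hb (Real.rpow_nonneg (norm_nonneg _) _)
  -- the annulus
  set A : Set (Rn N) := closedBall x₀ (3 * d) \ ball x₀ (2 * d) with hA_def
  have hAm : MeasurableSet A := measurableSet_closedBall.diff measurableSet_ball
  have hAfin : volume A < ⊤ :=
    lt_of_le_of_lt (measure_mono diff_subset) measure_closedBall_lt_top
  have hAΩ : ∀ y ∈ A, y ∉ Ω := by
    intro y hy hyΩ
    have h1 : dist y x₀ ≤ d := le_trans (dist_le_diam_of_mem hΩb hyΩ hx₀) hdiam
    have h2 : ¬ (dist y x₀ < 2 * d) := fun h => hy.2 (mem_ball.mpr h)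
    push_neg at h2
    linarith
  -- the annulus contains a ball of radius d/2
  have hA_vol : (volume (ball (0 : Rn N) (d / 2))).toReal ≤ (volume A).toReal := by
    obtain ⟨i⟩ : Nonempty (Fin N) := ⟨⟨0, hN⟩⟩
    set ev : Rn N := EuclideanSpace.single i (1 : ℝ) with hev
    have hev1 : ‖ev‖ = 1 := by rw [hev, EuclideanSpace.norm_single]; norm_num
    set c : Rn N := x₀ + (5 * d / 2) • ev with hc_def
    have hcx : dist c x₀ = 5 * d / 2 := by
      rw [hc_def, dist_eq_norm, add_sub_cancel_left, norm_smul, hev1]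
      rw [Real.norm_eq_abs, abs_of_nonneg (by linarith : (0:ℝ) ≤ 5 * d / 2), mul_one]
    have hsub : ball c (d / 2) ⊆ A := by
      intro y hy
      rw [mem_ball] at hy
      constructor
      · rw [mem_closedBall]
        calc dist y x₀ ≤ dist y c + dist c x₀ := dist_triangle _ _ _
          _ ≤ 3 * d := by rw [hcx]; linarith
      · rw [mem_ball, not_lt]
        have := dist_triangle c y x₀
        rw [dist_comm c y] at this
        linarith [hcx ▸ this]
    have h1 : volume (ball c (d / 2)) ≤ volume A := measure_mono hsub
    calc (volume (ball (0 : Rn N) (d / 2))).toReal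
        = (volume (ball c (d / 2))).toReal := by
            rw [Measure.addHaar_ball_center volume c (d / 2)]
      _ ≤ (volume A).toReal :=
          (ENNReal.toReal_le_toReal (lt_of_le_of_lt h1 hAfin).ne hAfin.ne).mpr h1
  -- indicator integrability
  have hind_int : Integrable (A.indicator fun _ => (1:ℝ)) volume := by
    rw [integrable_indicator_iff hAm]
    exact integrableOn_const hAfin.ne
  -- lower bound function
  set D₀ : ℝ := (4 * d) ^ e with hD₀_def
  have hD₀ : 0 < D₀ := Real.rpow_pos_of_pos (by linarith) _
  set F : Rn N × Rn N → ℝ :=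
    fun z => (Cd N p s d * K / D₀) * (v z.1 * A.indicator (fun _ => (1:ℝ)) z.2) with hF_def
  have hF_int : Integrable F volume := by
    rw [hF_def, Measure.volume_eq_prod]
    exact (hv_int.mul_prod hind_int).const_mul _
  -- pointwise a.e. bound F ≤ gker
  have hz12 : ∀ᵐ z : Rn N × Rn N, (z.1 ∉ Ω → u z.1 = 0) ∧ (z.2 ∉ Ω → u z.2 = 0) := by
    rw [Measure.volume_eq_prod]
    exact (Measure.quasiMeasurePreserving_fst.ae hzu).and
      (Measure.quasiMeasurePreserving_snd.ae hzu)
  have h_ptwise : ∀ᵐ z : Rn N × Rn N, F z ≤ gker N p s u v z := by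
    filter_upwards [hz12] with z hz
    by_cases h2 : z.2 ∈ A
    · have hu2 : u z.2 = 0 := hz.2 (hAΩ _ h2)
      have hv2 : v z.2 = 0 := by
        rw [hv_def]; simp only; rw [hu2]; exact max_eq_right (by linarith)
      by_cases h1 : u z.1 ≤ m
      · have hv1 : v z.1 = 0 := max_eq_right (by linarith)
        have : F z = 0 := by rw [hF_def]; simp [hv1]
        rw [this]
        exact gker_trunc_nonneg N p s u m z
      · push_neg at h1
        have h1Ω : z.1 ∈ Ω := by
          by_contra h
          have := hz.1 h
          linarith
        have hv1 : v z.1 = u z.1 - m := max_eq_left (by linarith)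
        have hd1 : dist z.1 x₀ ≤ d := le_trans (dist_le_diam_of_mem hΩb h1Ω hx₀) hdiam
        have hd2 : dist z.2 x₀ ≤ 3 * d := mem_closedBall.mp h2.1
        have hnorm : ‖z.1 - z.2‖ ≤ 4 * d := by
          rw [← dist_eq_norm]
          calc dist z.1 z.2 ≤ dist z.1 x₀ + dist x₀ z.2 := dist_triangle _ _ _
            _ ≤ 4 * d := by rw [dist_comm x₀ z.2]; linarith
        have hne : z.1 ≠ z.2 := fun h => (hAΩ _ h2) (h ▸ h1Ω)
        have hkerpos : 0 < ‖z.1 - z.2‖ ^ e :=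
          Real.rpow_pos_of_pos (norm_pos_iff.mpr (sub_ne_zero.mpr hne)) _
        have hker_le : ‖z.1 - z.2‖ ^ e ≤ D₀ :=
          Real.rpow_le_rpow (norm_nonneg _) hnorm he
        have hspow : spow (u z.1 - u z.2) (p - 1) = (u z.1) ^ (p - 1) := by
          rw [hu2, sub_zero]; exact spow_of_pos (by linarith) _ hp1
        have hCK : Cd N p s d * K ≤ (u z.1) ^ (p - 1) := by
          rw [← hmp]
          exact Real.rpow_le_rpow hm.le h1.le hp1.le
        have hFz : F z = Cd N p s d * K * v z.1 / D₀ := by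
          rw [hF_def]; simp only [indicator_of_mem h2]; ring
        have hgz : gker N p s u v z = (u z.1) ^ (p - 1) * v z.1 / ‖z.1 - z.2‖ ^ e := by
          unfold gker
          rw [hspow, hv2, sub_zero, ← he_def]
        rw [hFz, hgz]
        calc Cd N p s d * K * v z.1 / D₀
            ≤ (u z.1) ^ (p - 1) * v z.1 / D₀ :=
              div_le_div_nonneg_denom
                (mul_le_mul_of_nonneg_right hCK (hv0 _)) hD₀.le
          _ ≤ (u z.1) ^ (p - 1) * v z.1 / ‖z.1 - z.2‖ ^ e :=
              div_le_div_of_nonneg_left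
                (mul_nonneg (Real.rpow_nonneg (by linarith) _) (hv0 _)) hkerpos hker_le
    · have : F z = 0 := by
        rw [hF_def]; simp [indicator_of_notMem h2]
      rw [this]
      exact gker_trunc_nonneg N p s u m z
  -- integrate
  have h_int_le : ∫ z : Rn N × Rn N, F z ≤ ∫ z : Rn N × Rn N, gker N p s u v z :=
    integral_mono_ae hF_int hgker_int h_ptwise
  have hF_val : ∫ z : Rn N × Rn N, F z
      = (Cd N p s d * K / D₀) * ((∫ x, v x) * (volume A).toReal) := by
    rw [hF_def]
    rw [integral_const_mul]
    congr 1
    rw [Measure.volume_eq_prod, integral_prod_mul]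
    congr 1
    exact integral_indicator_one hAm
  have hIv : 0 ≤ ∫ x, v x := integral_nonneg hv0
  have h_upper : ∫ z : Rn N × Rn N, gker N p s u v z ≤ K * ∫ x, v x := by
    have := hle v hvW0 (Eventually.of_forall hv0)
    rw [setIntegral_eq_integral_of_ae_compl_eq_zero
      (by filter_upwards [hvz] with x hx hxn; rw [hx hxn, mul_zero])] at this
    simpa [integral_const_mul] using this
  have h_lower : 2 * K * ∫ x, v x ≤ ∫ z : Rn N × Rn N, F z := by
    rw [hF_val]
    have hkey : 2 * K * ∫ x, v x
        = (Cd N p s d * K / D₀) * ((∫ x, v x) * (volume (ball (0 : Rn N) (d / 2))).toReal) := by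
      have hb := ballvol_pos N hd
      rw [hD₀_def, Cd]
      field_simp
      ring
    rw [hkey]
    exact mul_le_mul_of_nonneg_left
      (mul_le_mul_of_nonneg_left hA_vol hIv) (by positivity)
  have hIv0 : ∫ x, v x = 0 := by
    have : 2 * K * ∫ x, v x ≤ K * ∫ x, v x := le_trans h_lower (le_trans h_int_le h_upper)
    nlinarith
  have hv_eq0 : v =ᵐ[volume] 0 :=
    (integral_eq_zero_iff_of_nonneg_ae (Eventually.of_forall hv0) hv_int).mp hIv0
  filter_upwards [hv_eq0] with x hx
  have h1 : u x - m ≤ v x := le_max_left _ _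
  rw [hx] at h1
  simpa using h1

end Aux13

/-- Corollary 4.2, `L^∞` bound. -/
theorem statement13 (N : ℕ) (hN : 1 < N) (p s : ℝ) (hp : 1 < p) (hs : s ∈ Set.Ioo (0 : ℝ) 1)
    (d : ℝ) (hd : 0 < d) :
    ∃ C > (0 : ℝ), ∀ Ω : Set (Rn N), IsOpen Ω → Bornology.IsBounded Ω → Metric.diam Ω ≤ d →
      ∀ K : ℝ, 0 < K → ∀ u : Rn N → ℝ, memW0 N p s Ω u →
        weakLE N p s Ω u (fun _ => K) → weakGE N p s Ω u (fun _ => -K) →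
        ∀ᵐ x, |u x| ≤ (C * K) ^ (1 / (p - 1)) := by
  refine ⟨Aux13.Cd N p s d, Aux13.Cd_pos N hd, ?_⟩
  intro Ω hΩo hΩb hdiam K hK u hu hle hge
  have hN0 : 0 < N := by omega
  have hub := Aux13.key_upper N hN0 p s hp hs.1 d hd Ω hΩo hΩb hdiam K hK u hu hle
  have hu' : memW0 N p s Ω (fun x => - u x) := by
    refine ⟨hu.1.neg, ?_, ?_⟩
    · have h : energyIntegrand N p s (fun x => - u x) = energyIntegrand N p s u := by
        funext z
        unfold energyIntegrand
        rw [show -u z.1 - -u z.2 = -(u z.1 - u z.2) by ring, abs_neg]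
      rw [h]; exact hu.2.1
    · filter_upwards [hu.2.2] with x hx hxn
      rw [hx hxn, neg_zero]
  have hle' : weakLE N p s Ω (fun x => - u x) (fun _ => K) := by
    intro φ hφ hφ0
    have hgk : (fun z : Rn N × Rn N => gker N p s (fun x => - u x) φ z)
        = fun z => - gker N p s u φ z := by
      funext z
      unfold gker
      rw [show -u z.1 - -u z.2 = -(u z.1 - u z.2) by ring, Aux13.spow_neg]
      ring
    have h1 := hge φ hφ hφ0
    have h2 : (∫ x in Ω, (fun _ : Rn N => (-K : ℝ)) x * φ x)
        = - ∫ x in Ω, (fun _ : Rn N => K) x * φ x := by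
      simp only [neg_mul]
      exact integral_neg _
    rw [h2] at h1
    calc (∫ z : Rn N × Rn N, gker N p s (fun x => - u x) φ z)
        = - ∫ z : Rn N × Rn N, gker N p s u φ z := by rw [hgk]; exact integral_neg _
      _ ≤ ∫ x in Ω, (fun _ : Rn N => K) x * φ x := by linarith
  have hlb := Aux13.key_upper N hN0 p s hp hs.1 d hd Ω hΩo hΩb hdiam K hK _ hu' hle'
  filter_upwards [hub, hlb] with x h1 h2
  have h2' : - u x ≤ (Aux13.Cd N p s d * K) ^ (1 / (p - 1)) := h2
  exact abs_le.mpr ⟨by linarith, h1⟩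


end
end
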